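/- arXiv:1602.04126 — 4 statements merged into one kernel-verified Lean document; each statement's English description precedes it below -/
import Mathlib

section
/- Every eaco is an existential doctrine: all reindexing functors along product projections have left adjoints satisfying the Beck–Chevalley condition and Frobenius reciprocity. -/
open CategoryTheory CategoryTheory.Limits

universe w v u

/-- A doctrine: a contravariant functor from a category with finite products
to partially ordered sets, presented via a family of fibers `P` and monotone
reindexing maps. -/
structure Doctrine (C : Type u) [Category.{v} C] (P : C → Type w)
    [∀ A, PartialOrder (P A)] where
  map : ∀ {X A : C}, (X ⟶ A) → P A → P X
  map_mono : ∀ {X A : C} (f : X ⟶ A) ⦃α β : P A⦄, α ≤ β → map f α ≤ map f β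
  map_id : ∀ {A : C} (α : P A), map (𝟙 A) α = α
  map_comp : ∀ {X Y A : C} (f : X ⟶ Y) (g : Y ⟶ A) (α : P A),
    map (f ≫ g) α = map f (map g α)

variable {C : Type u} [Category.{v} C] {P : C → Type w}

/-- The opposite doctrine `P^o`, with fibers the opposite posets. -/
def Doctrine.op [∀ A, PartialOrder (P A)] (D : Doctrine C P) :
    Doctrine C (fun A => (P A)ᵒᵈ) where
  map f α := OrderDual.toDual (D.map f (OrderDual.ofDual α))
  map_mono f _ _ h := D.map_mono f h
  map_id := D.map_id
  map_comp := D.map_comp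

/-- Comprehension structure on a doctrine with fiberwise top elements. -/
structure Comprehension [∀ A, PartialOrder (P A)] [∀ A, OrderTop (P A)]
    (D : Doctrine C P) where
  cObj : ∀ {A : C}, P A → C
  cArr : ∀ {A : C} (α : P A), cObj α ⟶ A
  map_cArr : ∀ {A : C} (α : P A), D.map (cArr α) α = ⊤
  univ : ∀ {A Y : C} (α : P A) (f : Y ⟶ A), D.map f α = ⊤ →
    ∃! k : Y ⟶ cObj α, k ≫ cArr α = f

/-- Fullness of comprehension: the functor `α ↦ ⌊α⌋` into subobjects is full. -/
def Comprehension.IsFull [∀ A, PartialOrder (P A)] [∀ A, OrderTop (P A)]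
    {D : Doctrine C P} (cmp : Comprehension D) : Prop :=
  ∀ (A : C) (α β : P A) (g : cmp.cObj α ⟶ cmp.cObj β),
    g ≫ cmp.cArr β = cmp.cArr α → α ≤ β

/-- Co-comprehension structure on a doctrine with fiberwise bottom elements. -/
structure CoComprehension [∀ A, PartialOrder (P A)] [∀ A, OrderBot (P A)]
    (D : Doctrine C P) where
  oObj : ∀ {A : C}, P A → C
  oArr : ∀ {A : C} (α : P A), oObj α ⟶ A
  map_oArr : ∀ {A : C} (α : P A), D.map (oArr α) α = ⊥
  univ : ∀ {A Y : C} (α : P A) (f : Y ⟶ A), D.map f α = ⊥ →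
    ∃! k : Y ⟶ oObj α, k ≫ oArr α = f

/-- Fullness of co-comprehension: the contravariant functor `α ↦ ⌈α⌉` into
subobjects is full. -/
def CoComprehension.IsFull [∀ A, PartialOrder (P A)] [∀ A, OrderBot (P A)]
    {D : Doctrine C P} (co : CoComprehension D) : Prop :=
  ∀ (A : C) (α β : P A) (g : co.oObj β ⟶ co.oObj α),
    g ≫ co.oArr α = co.oArr β → α ≤ β

/-- A stable initial object: an initial object `Z` with `X × Z ≅ Z` for all `X`. -/
def StableInitial [HasFiniteProducts C] (Z : C) : Prop :=
  Nonempty (IsInitial Z) ∧ ∀ X : C, Nonempty ((X ⨯ Z) ≅ Z)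

/-- The axiom of choice for a doctrine: along every projection `π_Γ : Γ × A → Γ`
with `A` not a stable initial object, reindexing has a left adjoint, and every
`ψ ∈ P(Γ × A)` has a choice arrow `ε_ψ : Γ ⟶ A` with `Σ_{π_Γ}ψ = ⟨id, ε_ψ⟩*ψ`. -/
structure AxChoice [HasFiniteProducts C] [∀ A, PartialOrder (P A)]
    (D : Doctrine C P) where
  Sig : ∀ (Γ A : C), ¬ StableInitial A → P (Γ ⨯ A) → P Γ
  adj : ∀ {Γ A : C} (h : ¬ StableInitial A) (ψ : P (Γ ⨯ A)) (β : P Γ),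
    Sig Γ A h ψ ≤ β ↔ ψ ≤ D.map prod.fst β
  eps : ∀ {Γ A : C}, ¬ StableInitial A → P (Γ ⨯ A) → (Γ ⟶ A)
  eps_spec : ∀ {Γ A : C} (h : ¬ StableInitial A) (ψ : P (Γ ⨯ A)),
    Sig Γ A h ψ = D.map (prod.lift (𝟙 Γ) (eps h ψ)) ψ

/-- Elementary structure: equality predicates `δ_A` such that
`ψ ↦ π₁*ψ ⊓ π₂₃*δ_A` is left adjoint to reindexing along `id_X × Δ_A`. -/
structure Elementary [HasFiniteProducts C] [∀ A, SemilatticeInf (P A)]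
    (D : Doctrine C P) where
  eq : ∀ A : C, P (A ⨯ A)
  eq_adj : ∀ (X A : C) (ψ : P (X ⨯ A)) (φ : P ((X ⨯ A) ⨯ A)),
    (D.map prod.fst ψ ⊓ D.map (prod.map prod.snd (𝟙 A)) (eq A)) ≤ φ ↔
      ψ ≤ D.map (prod.lift (𝟙 (X ⨯ A)) prod.snd) φ

/-- An eaco: an elementary doctrine with full co-comprehension satisfying AC,
together with the compatibility of choice arrows for graphs of co-comprehension
arrows with reindexing. -/
structure Eaco [HasFiniteProducts C] [∀ A, SemilatticeInf (P A)]
    [∀ A, OrderBot (P A)] (D : Doctrine C P) where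
  elem : Elementary D
  cocmp : CoComprehension D
  full : cocmp.IsFull
  ac : AxChoice D
  compat : ∀ {X A : C} (f : X ⟶ A) (α : P A)
      (h1 : ¬ StableInitial (cocmp.oObj α))
      (h2 : ¬ StableInitial (cocmp.oObj (D.map f α))),
      D.map f (D.map (prod.lift (𝟙 A)
          (ac.eps h1 (D.map (prod.map (𝟙 A) (cocmp.oArr α)) (elem.eq A))))
        (D.map (prod.map (𝟙 A) (cocmp.oArr α)) (elem.eq A)))
      = D.map (prod.lift (𝟙 X)
          (ac.eps h2 (D.map (prod.map (𝟙 X) (cocmp.oArr (D.map f α))) (elem.eq X))))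
        (D.map (prod.map (𝟙 X) (cocmp.oArr (D.map f α))) (elem.eq X))

/-- Weak power objects: the doctrine is higher order. -/
structure HigherOrder [HasFiniteProducts C] [∀ A, PartialOrder (P A)]
    (D : Doctrine C P) where
  pow : C → C
  mem : ∀ A : C, P (A ⨯ pow A)
  classify : ∀ (A Y : C) (φ : P (A ⨯ Y)),
    ∃ χ : Y ⟶ pow A, D.map (prod.map (𝟙 A) χ) (mem A) = φ

/-- A heaco: a higher order eaco. -/
structure Heaco [HasFiniteProducts C] [∀ A, SemilatticeInf (P A)]
    [∀ A, OrderBot (P A)] (D : Doctrine C P) where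
  eaco : Eaco D
  ho : HigherOrder D

/-- Implicational structure relative to right adjoints `Pi` along projections. -/
structure Implicational [HasFiniteProducts C] [∀ A, PartialOrder (P A)]
    (D : Doctrine C P) (Pi : ∀ (Γ A : C), P (Γ ⨯ A) → P Γ) where
  imp : ∀ {A : C}, P A → P A → P A
  map_imp : ∀ {X A : C} (f : X ⟶ A) (α β : P A),
    D.map f (imp α β) = imp (D.map f α) (D.map f β)
  pi_imp : ∀ {Γ A : C} (α : P Γ) (β : P (Γ ⨯ A)),
    Pi Γ A (imp (D.map prod.fst α) β) = imp α (Pi Γ A β)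
  ax_a : ∀ {A : C} (φ ψ : P A), φ ≤ imp ψ φ
  ax_b : ∀ {A : C} (γ φ ψ : P A), imp γ (imp φ ψ) ≤ imp (imp γ φ) (imp γ ψ)
  ax_c : ∀ {A : C} (γ φ ψ : P A), γ ≤ imp φ ψ → γ ≤ φ → γ ≤ ψ
  ax_d : ∀ {A : C} (γ φ ψ : P A), φ ≤ ψ → γ ≤ imp φ ψ

/-- A tripos: a Heyting-algebra valued doctrine with `Σ` and `Π` along
projections satisfying Beck–Chevalley, equality predicates, and weak power
objects. -/
structure Tripos [HasFiniteProducts C] [∀ A, PartialOrder (P A)]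
    (D : Doctrine C P) where
  inf : ∀ {A : C}, P A → P A → P A
  sup : ∀ {A : C}, P A → P A → P A
  himp : ∀ {A : C}, P A → P A → P A
  top : ∀ A : C, P A
  bot : ∀ A : C, P A
  inf_le_left : ∀ {A : C} (α β : P A), inf α β ≤ α
  inf_le_right : ∀ {A : C} (α β : P A), inf α β ≤ β
  le_inf : ∀ {A : C} (γ α β : P A), γ ≤ α → γ ≤ β → γ ≤ inf α β
  le_sup_left : ∀ {A : C} (α β : P A), α ≤ sup α β
  le_sup_right : ∀ {A : C} (α β : P A), β ≤ sup α β
  sup_le : ∀ {A : C} (α β γ : P A), α ≤ γ → β ≤ γ → sup α β ≤ γ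
  le_top : ∀ {A : C} (α : P A), α ≤ top A
  bot_le : ∀ {A : C} (α : P A), bot A ≤ α
  himp_adj : ∀ {A : C} (γ α β : P A), γ ≤ himp α β ↔ inf γ α ≤ β
  map_inf : ∀ {X A : C} (f : X ⟶ A) (α β : P A),
    D.map f (inf α β) = inf (D.map f α) (D.map f β)
  map_sup : ∀ {X A : C} (f : X ⟶ A) (α β : P A),
    D.map f (sup α β) = sup (D.map f α) (D.map f β)
  map_himp : ∀ {X A : C} (f : X ⟶ A) (α β : P A),
    D.map f (himp α β) = himp (D.map f α) (D.map f β)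
  map_top : ∀ {X A : C} (f : X ⟶ A), D.map f (top A) = top X
  map_bot : ∀ {X A : C} (f : X ⟶ A), D.map f (bot A) = bot X
  Sig : ∀ (Γ A : C), P (Γ ⨯ A) → P Γ
  Sig_adj : ∀ {Γ A : C} (ψ : P (Γ ⨯ A)) (β : P Γ),
    Sig Γ A ψ ≤ β ↔ ψ ≤ D.map prod.fst β
  Sig_bc : ∀ {Γ Δ A : C} (f : Δ ⟶ Γ) (ψ : P (Γ ⨯ A)),
    D.map f (Sig Γ A ψ) = Sig Δ A (D.map (prod.map f (𝟙 A)) ψ)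
  Pi : ∀ (Γ A : C), P (Γ ⨯ A) → P Γ
  Pi_adj : ∀ {Γ A : C} (ψ : P (Γ ⨯ A)) (β : P Γ),
    β ≤ Pi Γ A ψ ↔ D.map prod.fst β ≤ ψ
  Pi_bc : ∀ {Γ Δ A : C} (f : Δ ⟶ Γ) (ψ : P (Γ ⨯ A)),
    D.map f (Pi Γ A ψ) = Pi Δ A (D.map (prod.map f (𝟙 A)) ψ)
  eq : ∀ X : C, P (X ⨯ X)
  eq_spec : ∀ {X : C} (α : P (X ⨯ X)),
    top X ≤ D.map (prod.lift (𝟙 X) (𝟙 X)) α ↔ eq X ≤ α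
  pow : C → C
  mem : ∀ A : C, P (A ⨯ pow A)
  classify : ∀ (A Y : C) (φ : P (A ⨯ Y)),
    ∃ χ : Y ⟶ pow A, D.map (prod.map (𝟙 A) χ) (mem A) = φ


section AuxStatement14
set_option linter.unusedSectionVars false

variable {C : Type u} [Category.{v} C] [HasFiniteProducts C]
variable {P : C → Type w} [∀ A, SemilatticeInf (P A)] [∀ A, OrderBot (P A)]

/-- Over an initial object, any two predicates coincide (via full co-comprehension). -/
lemma aux_initial_subsingleton {D : Doctrine C P} (co : CoComprehension D)
    (full : co.IsFull) {Z : C} (hZ : IsInitial Z) (α β : P Z) : α = β := by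
  have h : ∀ γ δ : P Z, γ ≤ δ := by
    intro γ δ
    refine full Z γ δ (co.oArr δ ≫ hZ.to (co.oObj γ)) ?_
    rw [Category.assoc]
    have he : hZ.to (co.oObj γ) ≫ co.oArr γ = 𝟙 Z := hZ.hom_ext _ _
    rw [he, Category.comp_id]
  exact le_antisymm (h α β) (h β α)

/-- A retract of an initial object is initial. -/
noncomputable def aux_retract_initial {I Y : C} (hI : IsInitial I) (s : Y ⟶ I)
    (r : I ⟶ Y) (hs : s ≫ r = 𝟙 Y) : IsInitial Y :=
  IsInitial.ofUniqueHom (fun W => s ≫ hI.to W)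
    (fun W m => by
      have h1 : r ≫ m = hI.to W := hI.hom_ext _ _
      calc m = (s ≫ r) ≫ m := by rw [hs, Category.id_comp]
      _ = s ≫ hI.to W := by rw [Category.assoc, h1])

/-- Stable initial objects are strict: anything mapping into one is initial. -/
noncomputable def aux_strict {W Y : C} (hW : StableInitial W) (k : Y ⟶ W) :
    IsInitial Y := by
  have hI := hW.1.some
  have e := (hW.2 Y).some
  have hYW : IsInitial (Y ⨯ W) := hI.ofIso e.symm
  exact aux_retract_initial hYW (prod.lift (𝟙 Y) k) prod.fst (prod.lift_fst _ _)

variable {D : Doctrine C P}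

section ElementaryAux

/-- Reflexivity over a product. -/
lemma aux_refl_base (El : Elementary D)
    (hinf : ∀ {X A : C} (f : X ⟶ A) (α β : P A),
      D.map f (α ⊓ β) = D.map f α ⊓ D.map f β)
    (X A : C) (ψ : P (X ⨯ A)) :
    ψ ≤ D.map (prod.lift (prod.snd : X ⨯ A ⟶ A) prod.snd) (El.eq A) := by
  have h := (El.eq_adj X A ψ
    (D.map prod.fst ψ ⊓ D.map (prod.map prod.snd (𝟙 A)) (El.eq A))).mp le_rfl
  rw [hinf, ← D.map_comp, ← D.map_comp] at h
  have e1 : prod.lift (𝟙 (X ⨯ A)) prod.snd ≫ prod.fst = 𝟙 (X ⨯ A) :=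
    prod.lift_fst _ _
  have e2 : prod.lift (𝟙 (X ⨯ A)) prod.snd ≫ prod.map prod.snd (𝟙 A)
      = prod.lift (prod.snd : X ⨯ A ⟶ A) prod.snd := by
    apply Limits.prod.hom_ext <;> simp
  rw [e1, e2, D.map_id] at h
  exact h.trans inf_le_right

/-- Generalized reflexivity. -/
lemma aux_refl (El : Elementary D)
    (hinf : ∀ {X A : C} (f : X ⟶ A) (α β : P A),
      D.map f (α ⊓ β) = D.map f α ⊓ D.map f β)
    {Y A : C} (u : Y ⟶ A) (ψ : P Y) :
    ψ ≤ D.map (prod.lift u u) (El.eq A) := by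
  have h := aux_refl_base El hinf Y A (D.map prod.fst ψ)
  have h2 := D.map_mono (prod.lift (𝟙 Y) u) h
  rw [← D.map_comp, ← D.map_comp] at h2
  have e1 : prod.lift (𝟙 Y) u ≫ (prod.fst : Y ⨯ A ⟶ Y) = 𝟙 Y := prod.lift_fst _ _
  have e2 : prod.lift (𝟙 Y) u ≫ prod.lift (prod.snd : Y ⨯ A ⟶ A) prod.snd
      = prod.lift u u := by
    apply Limits.prod.hom_ext <;> simp [prod.lift_fst, prod.lift_snd, prod.lift_fst_assoc, prod.lift_snd_assoc]
  rw [e1, e2, D.map_id] at h2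
  exact h2

/-- Counit of the equality adjunction. -/
lemma aux_counit (El : Elementary D) (X A : C) (φ : P ((X ⨯ A) ⨯ A)) :
    D.map prod.fst (D.map (prod.lift (𝟙 (X ⨯ A)) prod.snd) φ) ⊓
      D.map (prod.map prod.snd (𝟙 A)) (El.eq A) ≤ φ :=
  (El.eq_adj X A _ φ).mpr le_rfl

/-- Generalized substitutivity of equality. -/
lemma aux_subst (El : Elementary D)
    (hinf : ∀ {X A : C} (f : X ⟶ A) (α β : P A),
      D.map f (α ⊓ β) = D.map f α ⊓ D.map f β)
    {Y A : C} (u v : Y ⟶ A) (θ : P A) :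
    D.map u θ ⊓ D.map (prod.lift u v) (El.eq A) ≤ D.map v θ := by
  have h := aux_counit El A A (D.map (prod.snd : (A ⨯ A) ⨯ A ⟶ A) θ)
  have h2 := D.map_mono (prod.lift (prod.lift u u) v) h
  rw [hinf, ← D.map_comp, ← D.map_comp, ← D.map_comp, ← D.map_comp, ← D.map_comp]
    at h2
  have e1 : prod.lift (prod.lift u u) v ≫ prod.fst ≫
      prod.lift (𝟙 (A ⨯ A)) prod.snd ≫ (prod.snd : (A ⨯ A) ⨯ A ⟶ A) = u := by
    simp [prod.lift_fst, prod.lift_snd, prod.lift_fst_assoc, prod.lift_snd_assoc]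
  have e2 : prod.lift (prod.lift u u) v ≫ prod.map prod.snd (𝟙 A)
      = prod.lift u v := by
    apply Limits.prod.hom_ext <;> simp [prod.lift_fst, prod.lift_snd, prod.lift_fst_assoc, prod.lift_snd_assoc]
  have e3 : prod.lift (prod.lift u u) v ≫ (prod.snd : (A ⨯ A) ⨯ A ⟶ A) = v :=
    prod.lift_snd _ _
  rw [← Category.assoc, ← Category.assoc] at e1
  rw [e2, e3, e1] at h2
  exact h2

/-- Symmetry of equality. -/
lemma aux_symm (El : Elementary D)
    (hinf : ∀ {X A : C} (f : X ⟶ A) (α β : P A),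
      D.map f (α ⊓ β) = D.map f α ⊓ D.map f β)
    {Y A : C} (u v : Y ⟶ A) :
    D.map (prod.lift u v) (El.eq A) ≤ D.map (prod.lift v u) (El.eq A) := by
  have h := aux_counit El A A
    (D.map (prod.lift (prod.snd : (A ⨯ A) ⨯ A ⟶ A) (prod.fst ≫ prod.snd))
      (El.eq A))
  have h2 := D.map_mono (prod.lift (prod.lift u u) v) h
  rw [hinf, ← D.map_comp, ← D.map_comp, ← D.map_comp, ← D.map_comp, ← D.map_comp]
    at h2
  have e1 : prod.lift (prod.lift u u) v ≫ prod.fst ≫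
      prod.lift (𝟙 (A ⨯ A)) prod.snd ≫
        prod.lift (prod.snd : (A ⨯ A) ⨯ A ⟶ A) (prod.fst ≫ prod.snd)
      = prod.lift u u := by
    apply Limits.prod.hom_ext <;> simp [prod.lift_fst, prod.lift_snd, prod.lift_fst_assoc, prod.lift_snd_assoc]
  have e2 : prod.lift (prod.lift u u) v ≫ prod.map prod.snd (𝟙 A)
      = prod.lift u v := by
    apply Limits.prod.hom_ext <;> simp [prod.lift_fst, prod.lift_snd, prod.lift_fst_assoc, prod.lift_snd_assoc]
  have e3 : prod.lift (prod.lift u u) v ≫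
      prod.lift (prod.snd : (A ⨯ A) ⨯ A ⟶ A) (prod.fst ≫ prod.snd)
      = prod.lift v u := by
    apply Limits.prod.hom_ext <;> simp [prod.lift_fst, prod.lift_snd, prod.lift_fst_assoc, prod.lift_snd_assoc]
  rw [show prod.lift (prod.lift u u) v ≫ prod.fst ≫
      prod.lift (𝟙 (A ⨯ A)) prod.snd ≫
        prod.lift (prod.snd : (A ⨯ A) ⨯ A ⟶ A) (prod.fst ≫ prod.snd)
      = ((prod.lift (prod.lift u u) v ≫ prod.fst) ≫
        prod.lift (𝟙 (A ⨯ A)) prod.snd) ≫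
          prod.lift (prod.snd : (A ⨯ A) ⨯ A ⟶ A) (prod.fst ≫ prod.snd) by
        rw [Category.assoc, Category.assoc]] at e1
  rw [e1, e2, e3] at h2
  exact le_trans (le_inf (aux_refl El hinf u _) le_rfl) h2

end ElementaryAux

/-- Sections of the projection land below the existential quantifier. -/
lemma aux_section (ac : AxChoice D) {Γ A : C} (h : ¬ StableInitial A)
    (χ : P (Γ ⨯ A)) (u : Γ ⟶ A) :
    D.map (prod.lift (𝟙 Γ) u) χ ≤ ac.Sig Γ A h χ := by
  have hunit : χ ≤ D.map prod.fst (ac.Sig Γ A h χ) := (ac.adj h χ _).mp le_rfl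
  have h2 := D.map_mono (prod.lift (𝟙 Γ) u) hunit
  rw [← D.map_comp, prod.lift_fst, D.map_id] at h2
  exact h2

/-- Main lemma: the bottom predicate is stable under reindexing along the first
projection, provided the base is not initial and the fibre is not stably initial. -/
lemma aux_ML (hinf : ∀ {X A : C} (f : X ⟶ A) (α β : P A),
      D.map f (α ⊓ β) = D.map f α ⊓ D.map f β)
    (E : Eaco D) (Γ A : C)
    (hΓ : ¬ Nonempty (IsInitial Γ)) (hA : ¬ StableInitial A) :
    D.map (prod.fst : Γ ⨯ A ⟶ Γ) (⊥ : P Γ) ≤ (⊥ : P (Γ ⨯ A)) := by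
  obtain ⟨k₀, hk₀, -⟩ := E.cocmp.univ (⊥ : P Γ) (𝟙 Γ) (D.map_id _)
  have h1 : ¬ StableInitial (E.cocmp.oObj (⊥ : P Γ)) :=
    fun S => hΓ ⟨aux_strict S k₀⟩
  have hq : D.map (prod.lift (E.cocmp.oArr (⊥ : P Γ))
        (E.ac.eps hA (⊥ : P (E.cocmp.oObj (⊥ : P Γ) ⨯ A))))
      (D.map (prod.fst : Γ ⨯ A ⟶ Γ) (⊥ : P Γ)) = ⊥ := by
    rw [← D.map_comp, prod.lift_fst, E.cocmp.map_oArr]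
  obtain ⟨k, hk, -⟩ := E.cocmp.univ _ _ hq
  have h2 : ¬ StableInitial (E.cocmp.oObj
      (D.map (prod.fst : Γ ⨯ A ⟶ Γ) (⊥ : P Γ))) :=
    fun S => hΓ ⟨aux_retract_initial (aux_strict S k) k₀ (E.cocmp.oArr _) hk₀⟩
  have hcompat := E.compat (prod.fst : Γ ⨯ A ⟶ Γ) (⊥ : P Γ) h1 h2
  set O' := E.cocmp.oObj (D.map (prod.fst : Γ ⨯ A ⟶ Γ) (⊥ : P Γ)) with hO'
  set o' := E.cocmp.oArr (D.map (prod.fst : Γ ⨯ A ⟶ Γ) (⊥ : P Γ)) with ho'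
  set G' := D.map (prod.map (𝟙 (Γ ⨯ A)) o') (E.elem.eq (Γ ⨯ A)) with hG'
  set ε' := E.ac.eps h2 G' with hε'
  have hβE : D.map (prod.fst : Γ ⨯ A ⟶ Γ) (⊥ : P Γ)
      ≤ D.map (prod.lift (𝟙 (Γ ⨯ A)) ε') G' := by
    rw [← hcompat]; exact D.map_mono _ bot_le
  have hEX : D.map (prod.lift (𝟙 (Γ ⨯ A)) ε') G'
      = D.map (prod.lift (𝟙 (Γ ⨯ A)) (ε' ≫ o')) (E.elem.eq (Γ ⨯ A)) := by
    rw [hG', ← D.map_comp]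
    congr 1
    apply Limits.prod.hom_ext <;> simp
  have hstep2 : ∀ θ : P (Γ ⨯ A),
      D.map (prod.fst : Γ ⨯ A ⟶ Γ) (⊥ : P Γ) ≤ D.map (ε' ≫ o') θ := by
    intro θ
    have hG'lift : G' = D.map (prod.lift
        (prod.fst : (Γ ⨯ A) ⨯ O' ⟶ Γ ⨯ A)
        (prod.snd ≫ o')) (E.elem.eq (Γ ⨯ A)) := by
      rw [hG']
      congr 1
      apply Limits.prod.hom_ext <;> simp [prod.lift_fst, prod.lift_snd, prod.lift_fst_assoc, prod.lift_snd_assoc] <;> rfl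
    have hsub := aux_subst E.elem hinf
      (prod.fst : (Γ ⨯ A) ⨯ O' ⟶ Γ ⨯ A)
      (prod.snd ≫ o') (D.map (prod.fst : Γ ⨯ A ⟶ Γ) (⊥ : P Γ))
    rw [← hG'lift] at hsub
    have hend : D.map ((prod.snd : (Γ ⨯ A) ⨯ O' ⟶ O') ≫ o')
        (D.map (prod.fst : Γ ⨯ A ⟶ Γ) (⊥ : P Γ))
        ≤ D.map ((prod.snd : (Γ ⨯ A) ⨯ O' ⟶ O') ≫ o') θ := by
      rw [D.map_comp, D.map_comp]
      refine D.map_mono _ ?_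
      have hb : D.map o' (D.map (prod.fst : Γ ⨯ A ⟶ Γ) (⊥ : P Γ)) = ⊥ := by
        rw [ho']; exact E.cocmp.map_oArr _
      rw [hb]; exact bot_le
    have hc2 := D.map_mono (prod.lift (𝟙 (Γ ⨯ A)) ε') (hsub.trans hend)
    have hcollapse : D.map (prod.lift (𝟙 (Γ ⨯ A)) ε')
        (D.map prod.fst (D.map (prod.fst : Γ ⨯ A ⟶ Γ) (⊥ : P Γ)) ⊓ G')
        = D.map (prod.fst : Γ ⨯ A ⟶ Γ) (⊥ : P Γ)
          ⊓ D.map (prod.lift (𝟙 (Γ ⨯ A)) ε') G' := by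
      rw [hinf, ← D.map_comp, prod.lift_fst, D.map_id]
    rw [hcollapse] at hc2
    have hcomp : prod.lift (𝟙 (Γ ⨯ A)) ε' ≫ ((prod.snd : (Γ ⨯ A) ⨯ O' ⟶ O') ≫ o') = ε' ≫ o' := by
      rw [← Category.assoc, prod.lift_snd]
    have hc3 : D.map (prod.lift (𝟙 (Γ ⨯ A)) ε')
        (D.map ((prod.snd : (Γ ⨯ A) ⨯ O' ⟶ O') ≫ o') θ) = D.map (ε' ≫ o') θ := by
      rw [← D.map_comp, hcomp]
    rw [hc3] at hc2
    exact (le_inf le_rfl hβE).trans hc2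
  have hsym := aux_symm E.elem hinf (𝟙 (Γ ⨯ A)) (ε' ≫ o')
  have hfin := aux_subst E.elem hinf (ε' ≫ o') (𝟙 (Γ ⨯ A)) (⊥ : P (Γ ⨯ A))
  rw [D.map_id] at hfin
  exact (le_inf (hstep2 ⊥) ((hβE.trans (le_of_eq hEX)).trans hsym)).trans hfin

/-- Endomorphism case of bottom stability. -/
lemma aux_endo (hinf : ∀ {X A : C} (f : X ⟶ A) (α β : P A),
      D.map f (α ⊓ β) = D.map f α ⊓ D.map f β)
    (E : Eaco D) {X : C} (hX : ¬ Nonempty (IsInitial X)) (e : X ⟶ X) :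
    D.map e (⊥ : P X) ≤ ⊥ := by
  have hstab : ¬ StableInitial X := fun S => hX S.1
  have hml := aux_ML hinf E X X hX hstab
  have hb : D.map (prod.lift (prod.snd : X ⨯ X ⟶ X) prod.fst)
      (⊥ : P (X ⨯ X)) ≤ ⊥ := by
    have hbb : prod.lift (prod.snd : X ⨯ X ⟶ X) prod.fst ≫
        prod.lift prod.snd prod.fst = 𝟙 (X ⨯ X) := by
      apply Limits.prod.hom_ext <;> simp [prod.lift_fst, prod.lift_snd, prod.lift_fst_assoc, prod.lift_snd_assoc]
    have h1 : (⊥ : P (X ⨯ X)) ≤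
        D.map (prod.lift (prod.snd : X ⨯ X ⟶ X) prod.fst) ⊥ := bot_le
    have h2 := D.map_mono (prod.lift (prod.snd : X ⨯ X ⟶ X) prod.fst) h1
    rw [← D.map_comp, hbb, D.map_id] at h2
    exact h2
  have hsnd : D.map (prod.snd : X ⨯ X ⟶ X) (⊥ : P X) ≤ ⊥ := by
    have h := (D.map_mono (prod.lift (prod.snd : X ⨯ X ⟶ X) prod.fst) hml).trans hb
    rw [← D.map_comp, prod.lift_fst] at h
    exact h
  have h3 := D.map_mono (prod.lift (𝟙 X) e) hsnd
  rw [← D.map_comp, prod.lift_snd] at h3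
  refine h3.trans ?_
  have h4 : (⊥ : P (X ⨯ X)) ≤ D.map prod.fst (⊥ : P X) := bot_le
  have h5 := D.map_mono (prod.lift (𝟙 X) e) h4
  rw [← D.map_comp, prod.lift_fst, D.map_id] at h5
  exact h5

/-- Bottom stability along first projections, all cases. -/
lemma aux_PB (hinf : ∀ {X A : C} (f : X ⟶ A) (α β : P A),
      D.map f (α ⊓ β) = D.map f α ⊓ D.map f β)
    (E : Eaco D) (Γ Δ : C) :
    D.map (prod.fst : Γ ⨯ Δ ⟶ Γ) (⊥ : P Γ) ≤ ⊥ := by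
  by_cases hX : Nonempty (IsInitial (Γ ⨯ Δ))
  · exact le_of_eq (aux_initial_subsingleton E.cocmp E.full hX.some _ _)
  · by_cases hΔ : StableInitial Δ
    · exact absurd ⟨hΔ.1.some.ofIso (hΔ.2 Γ).some.symm⟩ hX
    · by_cases hΓ : Nonempty (IsInitial Γ)
      · have hbot : (⊥ : P Γ) = D.map (hΓ.some.to (Γ ⨯ Δ)) (⊥ : P (Γ ⨯ Δ)) :=
          aux_initial_subsingleton E.cocmp E.full hΓ.some _ _
        have heq : D.map (prod.fst : Γ ⨯ Δ ⟶ Γ) (⊥ : P Γ)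
            = D.map (prod.fst ≫ hΓ.some.to (Γ ⨯ Δ)) (⊥ : P (Γ ⨯ Δ)) := by
          rw [D.map_comp, ← hbot]
        rw [heq]
        exact aux_endo hinf E hX _
      · exact aux_ML hinf E Γ Δ hΓ hΔ

/-- The doctrine of an eaco preserves bottom elements. -/
lemma aux_map_bot (hinf : ∀ {X A : C} (f : X ⟶ A) (α β : P A),
      D.map f (α ⊓ β) = D.map f α ⊓ D.map f β)
    (E : Eaco D) {Δ Γ : C} (f : Δ ⟶ Γ) :
    D.map f (⊥ : P Γ) = ⊥ := by
  refine le_antisymm ?_ bot_le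
  have hPB := aux_PB hinf E Γ Δ
  have hb : D.map (prod.lift (prod.snd : Δ ⨯ Γ ⟶ Γ) prod.fst)
      (⊥ : P (Γ ⨯ Δ)) ≤ ⊥ := by
    have hbb : prod.lift (prod.snd : Δ ⨯ Γ ⟶ Γ) prod.fst ≫
        prod.lift (prod.snd : Γ ⨯ Δ ⟶ Δ) prod.fst = 𝟙 (Δ ⨯ Γ) := by
      apply Limits.prod.hom_ext <;> simp [prod.lift_fst, prod.lift_snd, prod.lift_fst_assoc, prod.lift_snd_assoc]
    have h1 : (⊥ : P (Γ ⨯ Δ)) ≤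
        D.map (prod.lift (prod.snd : Γ ⨯ Δ ⟶ Δ) prod.fst) (⊥ : P (Δ ⨯ Γ)) := bot_le
    have h2 := D.map_mono (prod.lift (prod.snd : Δ ⨯ Γ ⟶ Γ) prod.fst) h1
    rw [← D.map_comp, hbb, D.map_id] at h2
    exact h2
  have hsnd : D.map (prod.snd : Δ ⨯ Γ ⟶ Γ) (⊥ : P Γ) ≤ ⊥ := by
    have h := (D.map_mono (prod.lift (prod.snd : Δ ⨯ Γ ⟶ Γ) prod.fst) hPB).trans hb
    rw [← D.map_comp, prod.lift_fst] at h
    exact h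
  have h3 := D.map_mono (prod.lift (𝟙 Δ) f) hsnd
  rw [← D.map_comp, prod.lift_snd] at h3
  refine h3.trans ?_
  have h4 : (⊥ : P (Δ ⨯ Γ)) ≤ D.map prod.fst (⊥ : P Δ) := bot_le
  have h5 := D.map_mono (prod.lift (𝟙 Δ) f) h4
  rw [← D.map_comp, prod.lift_fst, D.map_id] at h5
  exact h5

end AuxStatement14

/-- Every eaco is an existential doctrine: all reindexing
functors along product projections have left adjoints satisfying the
Beck–Chevalley condition and Frobenius reciprocity. -/
theorem statement14 {C : Type u} [Category.{v} C] [HasFiniteProducts C]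
    {P : C → Type w} [∀ A, SemilatticeInf (P A)] [∀ A, OrderBot (P A)]
    (D : Doctrine C P)
    (map_inf : ∀ {X A : C} (f : X ⟶ A) (α β : P A),
      D.map f (α ⊓ β) = D.map f α ⊓ D.map f β)
    (E : Eaco D) :
    ∃ Sig : ∀ (Γ A : C), P (Γ ⨯ A) → P Γ,
      (∀ (Γ A : C) (ψ : P (Γ ⨯ A)) (β : P Γ),
        Sig Γ A ψ ≤ β ↔ ψ ≤ D.map prod.fst β) ∧
      (∀ (Γ Δ A : C) (f : Δ ⟶ Γ) (ψ : P (Γ ⨯ A)),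
        D.map f (Sig Γ A ψ) = Sig Δ A (D.map (prod.map f (𝟙 A)) ψ)) ∧
      (∀ (Γ A : C) (ψ : P (Γ ⨯ A)) (β : P Γ),
        Sig Γ A (ψ ⊓ D.map prod.fst β) = β ⊓ Sig Γ A ψ) := by
  classical
  refine ⟨fun Γ A ψ => if h : StableInitial A then ⊥ else E.ac.Sig Γ A h ψ,
    ?_, ?_, ?_⟩
  · intro Γ A ψ β
    by_cases h : StableInitial A
    · simp only [dif_pos h]
      have hZ : IsInitial (Γ ⨯ A) := h.1.some.ofIso (h.2 Γ).some.symm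
      exact ⟨fun _ => le_of_eq (aux_initial_subsingleton E.cocmp E.full hZ _ _),
        fun _ => bot_le⟩
    · simp only [dif_neg h]
      exact E.ac.adj h ψ β
  · intro Γ Δ A f ψ
    by_cases h : StableInitial A
    · simp only [dif_pos h]
      exact aux_map_bot (fun f α β => map_inf f α β) E f
    · simp only [dif_neg h]
      apply le_antisymm
      · have hspec := E.ac.eps_spec h ψ
        have e1 : prod.lift (𝟙 Δ) (f ≫ E.ac.eps h ψ) ≫ prod.map f (𝟙 A)
            = f ≫ prod.lift (𝟙 Γ) (E.ac.eps h ψ) := by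
          apply Limits.prod.hom_ext <;> simp
        have heq : D.map f (E.ac.Sig Γ A h ψ)
            = D.map (prod.lift (𝟙 Δ) (f ≫ E.ac.eps h ψ))
              (D.map (prod.map f (𝟙 A)) ψ) := by
          rw [hspec, ← D.map_comp, ← D.map_comp, e1]
        rw [heq]
        exact aux_section E.ac h _ _
      · refine (E.ac.adj h _ _).mpr ?_
        have hunit : ψ ≤ D.map prod.fst (E.ac.Sig Γ A h ψ) :=
          (E.ac.adj h ψ _).mp le_rfl
        have h2 := D.map_mono (prod.map f (𝟙 A)) hunit
        rw [← D.map_comp, prod.map_fst, D.map_comp] at h2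
        exact h2
  · intro Γ A ψ β
    by_cases h : StableInitial A
    · simp only [dif_pos h]
      exact le_antisymm bot_le inf_le_right
    · simp only [dif_neg h]
      apply le_antisymm
      · have hspec := E.ac.eps_spec h (ψ ⊓ D.map prod.fst β)
        have hcol : D.map (prod.lift (𝟙 Γ) (E.ac.eps h (ψ ⊓ D.map prod.fst β)))
            (D.map prod.fst β) = β := by
          rw [← D.map_comp, prod.lift_fst, D.map_id]
        rw [hspec, map_inf, hcol]
        exact le_inf inf_le_right (inf_le_left.trans (aux_section E.ac h ψ _))
      · have hspec2 := E.ac.eps_spec h ψ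
        have hcol2 : D.map (prod.lift (𝟙 Γ) (E.ac.eps h ψ))
            (D.map prod.fst β) = β := by
          rw [← D.map_comp, prod.lift_fst, D.map_id]
        have hle : D.map (prod.lift (𝟙 Γ) (E.ac.eps h ψ)) (ψ ⊓ D.map prod.fst β)
            ≤ E.ac.Sig Γ A h (ψ ⊓ D.map prod.fst β) := aux_section E.ac h _ _
        rw [map_inf, hcol2, ← hspec2] at hle
        rw [inf_comm]
        exact hle
end

section
/- Every eaco (C,P) is a restricted Σ(C_P^o)-doctrine: for every co-comprehension arrow ⌈α⌉ and every arrow f : X → A, the restricted Beck–Chevalley condition f*Σ_{⌈α⌉}⌈α⌉*β = Σ_{⌈f*α⌉} q* ⌈α⌉*β holds, where q is the induced arrow on the pullback of ⌈α⌉ along f. -/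
open CategoryTheory CategoryTheory.Limits

universe w v u

variable {C : Type u} [Category.{v} C] {P : C → Type w}

namespace Statement15Aux

variable [HasFiniteProducts C] [∀ A, SemilatticeInf (P A)] [∀ A, OrderBot (P A)]

/-- Any object mapping into a stable initial object is stable initial. -/
theorem si_of_hom {W Z : C} (q : W ⟶ Z) (hZ : StableInitial Z) : StableInitial W := by
  obtain ⟨⟨hI⟩, hP⟩ := hZ
  have hWZ : IsInitial (W ⨯ Z) := hI.ofIso (hP W).some.symm
  have eWZ : W ≅ W ⨯ Z :=
    { hom := prod.lift (𝟙 W) q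
      inv := prod.fst
      hom_inv_id := by simp [prod.lift_fst]
      inv_hom_id := hWZ.hom_ext _ _ }
  have eW : W ≅ Z := eWZ ≪≫ (hP W).some
  refine ⟨⟨hI.ofIso eW.symm⟩, fun X => ⟨?_⟩⟩
  exact (prod.mapIso (Iso.refl X) eW) ≪≫ (hP X).some ≪≫ eW.symm

variable {D : Doctrine C P}

/-- The fiber over an initial object is a singleton (via full co-comprehension). -/
theorem le_P_si (E : Eaco D) {Z : C} (hI : IsInitial Z) (γ γ' : P Z) : γ ≤ γ' := by
  refine E.full Z γ γ' (E.cocmp.oArr γ' ≫ hI.to (E.cocmp.oObj γ)) ?_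
  rw [Category.assoc, hI.hom_ext (hI.to (E.cocmp.oObj γ) ≫ E.cocmp.oArr γ) (𝟙 Z),
    Category.comp_id]

/-- A predicate whose co-comprehension is initial is the maximum of its fiber. -/
theorem le_max (E : Eaco D) {Y : C} {γ : P Y} (hI : IsInitial (E.cocmp.oObj γ))
    (χ : P Y) : χ ≤ γ :=
  E.full Y χ γ (hI.to _) (hI.hom_ext _ _)

/-- The canonical comparison arrow between co-comprehensions. -/
theorem hom_q (E : Eaco D) {Y B : C} (t : Y ⟶ B) (α : P B) :
    ∃ q : E.cocmp.oObj (D.map t α) ⟶ E.cocmp.oObj α,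
      q ≫ E.cocmp.oArr α = E.cocmp.oArr (D.map t α) ≫ t := by
  have h : D.map (E.cocmp.oArr (D.map t α) ≫ t) α = ⊥ := by
    rw [D.map_comp, E.cocmp.map_oArr]
  obtain ⟨k, hk, -⟩ := E.cocmp.univ α _ h
  exact ⟨k, hk⟩

theorem si_of_si_oObj_bot (E : Eaco D) {Y : C}
    (h : StableInitial (E.cocmp.oObj (⊥ : P Y))) : StableInitial Y := by
  obtain ⟨k, -, -⟩ := E.cocmp.univ (⊥ : P Y) (𝟙 Y) (by rw [D.map_id])
  exact si_of_hom k h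

section Elem

variable (E : Eaco D)

/-- Reflexivity of the equality predicate, contracted form. -/
theorem refl_le (minf : ∀ {X A : C} (f : X ⟶ A) (α β : P A),
    D.map f (α ⊓ β) = D.map f α ⊓ D.map f β) {X A : C} (ψ : P (X ⨯ A)) :
    ψ ≤ D.map (prod.lift prod.snd prod.snd) (E.elem.eq A) := by
  have h := (E.elem.eq_adj X A ψ
    (D.map prod.fst ψ ⊓ D.map (prod.map prod.snd (𝟙 A)) (E.elem.eq A))).mp le_rfl
  rw [minf] at h
  refine le_trans h (le_trans inf_le_right (le_of_eq ?_))
  rw [← D.map_comp, prod.lift_map, Category.id_comp, Category.comp_id]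

/-- Reflexivity along an arbitrary arrow. -/
theorem refl_any (minf : ∀ {X A : C} (f : X ⟶ A) (α β : P A),
    D.map f (α ⊓ β) = D.map f α ⊓ D.map f β) {Y A : C} (t : Y ⟶ A) (χ : P Y) :
    χ ≤ D.map (prod.lift t t) (E.elem.eq A) := by
  have h := refl_le E minf (D.map (prod.fst : Y ⨯ A ⟶ Y) χ)
  have h2 := D.map_mono (prod.lift (𝟙 Y) t) h
  rw [← D.map_comp, ← D.map_comp, prod.lift_fst, D.map_id, prod.comp_lift,
    prod.lift_snd] at h2
  exact h2

/-- Substitutivity of the equality predicate (parameterized form). -/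
theorem subst {X A : C} (Θ : P (X ⨯ A)) :
    D.map prod.fst Θ ⊓ D.map (prod.map prod.snd (𝟙 A)) (E.elem.eq A)
      ≤ D.map (prod.map prod.fst (𝟙 A)) Θ := by
  refine (E.elem.eq_adj X A Θ _).mpr ?_
  have hc : prod.lift (𝟙 (X ⨯ A)) prod.snd ≫ prod.map prod.fst (𝟙 A)
      = 𝟙 (X ⨯ A) := by
    rw [prod.lift_map, Category.id_comp, Category.comp_id, prod.lift_fst_snd]
  rw [← D.map_comp, hc, D.map_id]

/-- Substitutivity in the second variable. -/
theorem subst_snd (minf : ∀ {X A : C} (f : X ⟶ A) (α β : P A),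
    D.map f (α ⊓ β) = D.map f α ⊓ D.map f β) {A : C} (β : P A) :
    D.map prod.fst β ⊓ E.elem.eq A ≤ D.map prod.snd β := by
  have h := subst E (X := A) (A := A) (D.map prod.snd β)
  have h2 := D.map_mono (prod.map (prod.lift (𝟙 A) (𝟙 A)) (𝟙 A)) h
  rw [minf, ← D.map_comp, ← D.map_comp, ← D.map_comp, ← D.map_comp,
    ← D.map_comp] at h2
  have c1 : (prod.map (prod.lift (𝟙 A) (𝟙 A)) (𝟙 A) ≫ (prod.fst : _ ⟶ A ⨯ A))
      ≫ prod.snd = (prod.fst : A ⨯ A ⟶ A) := by simp [prod.lift_fst, prod.lift_snd]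
  have c2 : prod.map (prod.lift (𝟙 A) (𝟙 A)) (𝟙 A) ≫ prod.map prod.snd (𝟙 A)
      = 𝟙 (A ⨯ A) := by
    apply Limits.prod.hom_ext <;> simp [prod.lift_fst, prod.lift_snd]
  have c3 : (prod.map (prod.lift (𝟙 A) (𝟙 A)) (𝟙 A) ≫ prod.map prod.fst (𝟙 A))
      ≫ prod.snd = (prod.snd : A ⨯ A ⟶ A) := by simp
  rw [c1, c2, D.map_id, c3] at h2
  exact h2

/-- Symmetry of the equality predicate. -/
theorem eq_symm (minf : ∀ {X A : C} (f : X ⟶ A) (α β : P A),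
    D.map f (α ⊓ β) = D.map f α ⊓ D.map f β) {A : C} :
    E.elem.eq A ≤ D.map (prod.lift prod.snd prod.fst) (E.elem.eq A) := by
  have h := subst E (X := A) (A := A)
    (D.map (prod.lift prod.snd prod.fst) (E.elem.eq A))
  have h2 := D.map_mono (prod.map (prod.lift (𝟙 A) (𝟙 A)) (𝟙 A)) h
  rw [minf, ← D.map_comp, ← D.map_comp, ← D.map_comp, ← D.map_comp,
    ← D.map_comp] at h2
  have c1 : (prod.map (prod.lift (𝟙 A) (𝟙 A)) (𝟙 A) ≫ (prod.fst : _ ⟶ A ⨯ A))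
      ≫ prod.lift prod.snd prod.fst
      = prod.lift (prod.fst : A ⨯ A ⟶ A) prod.fst := by
    apply Limits.prod.hom_ext <;> simp [prod.lift_fst, prod.lift_snd]
  have c2 : prod.map (prod.lift (𝟙 A) (𝟙 A)) (𝟙 A) ≫ prod.map prod.snd (𝟙 A)
      = 𝟙 (A ⨯ A) := by
    apply Limits.prod.hom_ext <;> simp [prod.lift_fst, prod.lift_snd]
  have c3 : (prod.map (prod.lift (𝟙 A) (𝟙 A)) (𝟙 A) ≫ prod.map prod.fst (𝟙 A))
      ≫ prod.lift prod.snd prod.fst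
      = prod.lift (prod.snd : A ⨯ A ⟶ A) prod.fst := by
    apply Limits.prod.hom_ext <;> simp [prod.lift_fst, prod.lift_snd]
  rw [c1, c2, D.map_id, c3] at h2
  exact le_trans (le_inf (refl_any E minf prod.fst (E.elem.eq A)) le_rfl) h2

/-- Substitutivity in the first variable. -/
theorem subst_fst (minf : ∀ {X A : C} (f : X ⟶ A) (α β : P A),
    D.map f (α ⊓ β) = D.map f α ⊓ D.map f β) {A : C} (β : P A) :
    E.elem.eq A ⊓ D.map prod.snd β ≤ D.map prod.fst β := by
  have h := D.map_mono (prod.lift (prod.snd : A ⨯ A ⟶ A) prod.fst)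
    (subst_snd E minf β)
  rw [minf, ← D.map_comp, ← D.map_comp, prod.lift_fst, prod.lift_snd] at h
  refine le_trans (inf_le_inf_right _ (eq_symm E minf)) ?_
  rwa [inf_comm] at h

/-- The key graph lemma:  `G(g) ⊓ π₂*(g*χ) = G(g) ⊓ π₁*χ`. -/
theorem G_le_fst (minf : ∀ {X A : C} (f : X ⟶ A) (α β : P A),
    D.map f (α ⊓ β) = D.map f α ⊓ D.map f β) {B Z : C} (g : Z ⟶ B) (χ : P B) :
    D.map (prod.map (𝟙 B) g) (E.elem.eq B) ⊓ D.map prod.snd (D.map g χ)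
      ≤ D.map prod.fst χ := by
  have h := D.map_mono (prod.map (𝟙 B) g) (subst_fst E minf χ)
  rw [minf, ← D.map_comp, ← D.map_comp, prod.map_snd, prod.map_fst,
    Category.comp_id, D.map_comp] at h
  exact h

theorem fst_G_le (minf : ∀ {X A : C} (f : X ⟶ A) (α β : P A),
    D.map f (α ⊓ β) = D.map f α ⊓ D.map f β) {B Z : C} (g : Z ⟶ B) (χ : P B) :
    D.map prod.fst χ ⊓ D.map (prod.map (𝟙 B) g) (E.elem.eq B)
      ≤ D.map prod.snd (D.map g χ) := by
  have h := D.map_mono (prod.map (𝟙 B) g) (subst_snd E minf χ)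
  rw [minf, ← D.map_comp, ← D.map_comp, prod.map_snd, prod.map_fst,
    Category.comp_id, D.map_comp] at h
  exact h

theorem G_inf (minf : ∀ {X A : C} (f : X ⟶ A) (α β : P A),
    D.map f (α ⊓ β) = D.map f α ⊓ D.map f β) {B Z : C} (g : Z ⟶ B) (χ : P B) :
    D.map (prod.map (𝟙 B) g) (E.elem.eq B) ⊓ D.map prod.snd (D.map g χ)
      = D.map (prod.map (𝟙 B) g) (E.elem.eq B) ⊓ D.map prod.fst χ := by
  refine le_antisymm (le_inf inf_le_left (G_le_fst E minf g χ))
    (le_inf inf_le_left ?_)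
  rw [inf_comm]
  exact fst_G_le E minf g χ

/-- Any reindexed predicate lies below the existential quantification. -/
theorem lift_le_sig {Γ Z' : C} (h : ¬ StableInitial Z') (k : Γ ⟶ Z')
    (ψ : P (Γ ⨯ Z')) :
    D.map (prod.lift (𝟙 Γ) k) ψ ≤ E.ac.Sig Γ Z' h ψ := by
  have h1 : ψ ≤ D.map prod.fst (E.ac.Sig Γ Z' h ψ) := (E.ac.adj h ψ _).mp le_rfl
  have h2 := D.map_mono (prod.lift (𝟙 Γ) k) h1
  rwa [← D.map_comp, prod.lift_fst, D.map_id] at h2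

/-- Frobenius reciprocity for the choice quantifier. -/
theorem frobenius (minf : ∀ {X A : C} (f : X ⟶ A) (α β : P A),
    D.map f (α ⊓ β) = D.map f α ⊓ D.map f β) {Γ Z' : C} (h : ¬ StableInitial Z') (ψ : P (Γ ⨯ Z'))
    (β : P Γ) :
    E.ac.Sig Γ Z' h (ψ ⊓ D.map prod.fst β) = E.ac.Sig Γ Z' h ψ ⊓ β := by
  refine le_antisymm (le_inf ?_ ?_) ?_
  · exact (E.ac.adj h _ _).mpr (le_trans inf_le_left ((E.ac.adj h ψ _).mp le_rfl))
  · exact (E.ac.adj h _ _).mpr inf_le_right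
  · rw [E.ac.eps_spec h ψ]
    have hb : β = D.map (prod.lift (𝟙 Γ) (E.ac.eps h ψ)) (D.map prod.fst β) := by
      rw [← D.map_comp, prod.lift_fst, D.map_id]
    calc D.map (prod.lift (𝟙 Γ) (E.ac.eps h ψ)) ψ ⊓ β
        = D.map (prod.lift (𝟙 Γ) (E.ac.eps h ψ)) (ψ ⊓ D.map prod.fst β) := by
          rw [minf, ← hb]
      _ ≤ _ := lift_le_sig E h _ _

/-- The adjunction for the left adjoint along an arbitrary arrow `g`. -/
theorem adj_graph (minf : ∀ {X A : C} (f : X ⟶ A) (α β : P A),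
    D.map f (α ⊓ β) = D.map f α ⊓ D.map f β) {B Z : C} (h : ¬ StableInitial Z) (g : Z ⟶ B) (γ : P Z)
    (β : P B) :
    E.ac.Sig B Z h (D.map (prod.map (𝟙 B) g) (E.elem.eq B) ⊓ D.map prod.snd γ) ≤ β
      ↔ γ ≤ D.map g β := by
  constructor
  · intro hh
    have h1 := (E.ac.adj h _ β).mp hh
    have h2 := D.map_mono (prod.lift g (𝟙 Z)) h1
    rw [minf, ← D.map_comp, ← D.map_comp, ← D.map_comp, prod.lift_snd,
      D.map_id, prod.lift_fst] at h2
    have h3 : prod.lift g (𝟙 Z) ≫ prod.map (𝟙 B) g = prod.lift g g := by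
      rw [prod.lift_map, Category.comp_id, Category.id_comp]
    rw [h3] at h2
    exact le_trans (le_inf (refl_any E minf g γ) le_rfl) h2
  · intro hh
    refine (E.ac.adj h _ β).mpr ?_
    refine le_trans (inf_le_inf_left _ (D.map_mono prod.snd hh)) ?_
    rw [G_inf E minf g β]
    exact inf_le_right

/-- Bottom is preserved by reindexing, assuming the two stability hypotheses
needed for the eaco compatibility condition. -/
theorem bot_transfer (minf : ∀ {X A : C} (f : X ⟶ A) (α β : P A),
    D.map f (α ⊓ β) = D.map f α ⊓ D.map f β) {X' B : C} (f : X' ⟶ B)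
    (h1 : ¬ StableInitial (E.cocmp.oObj (⊥ : P B)))
    (h2 : ¬ StableInitial (E.cocmp.oObj (D.map f (⊥ : P B)))) :
    D.map f (⊥ : P B) = ⊥ := by
  refine le_antisymm ?_ bot_le
  have step1 : (⊥ : P B) = E.ac.Sig B _ h1
      (D.map (prod.map (𝟙 B) (E.cocmp.oArr (⊥ : P B))) (E.elem.eq B)
        ⊓ D.map prod.snd (D.map (E.cocmp.oArr (⊥ : P B)) (⊥ : P B))) :=
    le_antisymm bot_le
      ((adj_graph E minf h1 (E.cocmp.oArr (⊥ : P B)) _ ⊥).mpr le_rfl)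
  rw [step1, G_inf E minf (E.cocmp.oArr (⊥ : P B)) (⊥ : P B),
    frobenius E minf h1 _ ⊥, minf, E.ac.eps_spec h1, E.compat f ⊥ h1 h2,
    ← E.ac.eps_spec h2, ← frobenius E minf h2 _ (D.map f (⊥ : P B)),
    ← G_inf E minf (E.cocmp.oArr (D.map f (⊥ : P B))) (D.map f (⊥ : P B))]
  refine (adj_graph E minf h2 (E.cocmp.oArr (D.map f (⊥ : P B))) _ ⊥).mpr ?_
  rw [E.cocmp.map_oArr]
  exact bot_le

include E in
/-- Bottom is preserved by all reindexing maps in an eaco. -/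
theorem bot_map (minf : ∀ {X A : C} (f : X ⟶ A) (α β : P A),
    D.map f (α ⊓ β) = D.map f α ⊓ D.map f β) {Y B : C} (u : Y ⟶ B) : D.map u (⊥ : P B) = ⊥ := by
  by_cases hB : StableInitial B
  · exact le_antisymm (le_P_si E (si_of_hom u hB).1.some _ _) bot_le
  · have hOB : ¬ StableInitial (E.cocmp.oObj (⊥ : P B)) :=
      fun h => hB (si_of_si_oObj_bot E h)
    by_cases hY : StableInitial Y
    · exact le_antisymm (le_P_si E hY.1.some _ _) bot_le
    · by_cases hs : StableInitial
        (E.cocmp.oObj (D.map (prod.snd : Y ⨯ B ⟶ B) (⊥ : P B)))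
      · exfalso
        obtain ⟨q, -⟩ := hom_q E (prod.lift (E.ac.eps hY (⊥ : P (B ⨯ Y))) (𝟙 B))
          (D.map (prod.snd : Y ⨯ B ⟶ B) (⊥ : P B))
        have hz : D.map (prod.lift (E.ac.eps hY (⊥ : P (B ⨯ Y))) (𝟙 B))
            (D.map (prod.snd : Y ⨯ B ⟶ B) (⊥ : P B)) = (⊥ : P B) := by
          rw [← D.map_comp, prod.lift_snd, D.map_id]
        rw [hz] at q
        exact hOB (si_of_hom q hs)
      · have E1 : D.map (prod.snd : Y ⨯ B ⟶ B) (⊥ : P B) = ⊥ :=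
          bot_transfer E minf _ hOB hs
        have e2 : D.map u (⊥ : P B)
            = D.map (prod.lift (𝟙 Y) u) (D.map (prod.snd : Y ⨯ B ⟶ B) (⊥ : P B)) := by
          rw [← D.map_comp, prod.lift_snd]
        rw [e2, E1]
        refine le_antisymm (le_trans (lift_le_sig E hB u ⊥) ?_) bot_le
        exact (E.ac.adj hB ⊥ ⊥).mpr bot_le

end Elem

end Statement15Aux

/-- Every eaco is a restricted `Σ(C_P^o)`-doctrine: there are
left adjoints along co-comprehension arrows satisfying the restricted
Beck–Chevalley condition `f*Σ_{⌈α⌉}⌈α⌉*β = Σ_{⌈f*α⌉} q* ⌈α⌉*β`, where `q` is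
the induced arrow on the pullback of `⌈α⌉` along `f`. -/
theorem statement15 {C : Type u} [Category.{v} C] [HasFiniteProducts C]
    {P : C → Type w} [∀ A, SemilatticeInf (P A)] [∀ A, OrderBot (P A)]
    (D : Doctrine C P)
    (map_inf : ∀ {X A : C} (f : X ⟶ A) (α β : P A),
      D.map f (α ⊓ β) = D.map f α ⊓ D.map f β)
    (E : Eaco D) :
    ∃ SigCo : ∀ (A : C) (α : P A), P (E.cocmp.oObj α) → P A,
      (∀ (A : C) (α : P A) (γ : P (E.cocmp.oObj α)) (β : P A),
        SigCo A α γ ≤ β ↔ γ ≤ D.map (E.cocmp.oArr α) β) ∧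
      (∀ (X A : C) (f : X ⟶ A) (α : P A)
        (q : E.cocmp.oObj (D.map f α) ⟶ E.cocmp.oObj α),
        q ≫ E.cocmp.oArr α = E.cocmp.oArr (D.map f α) ≫ f →
        ∀ β : P A,
          D.map f (SigCo A α (D.map (E.cocmp.oArr α) β))
            = SigCo X (D.map f α) (D.map q (D.map (E.cocmp.oArr α) β))) := by
  classical
  refine ⟨fun A α γ =>
    if h : StableInitial (E.cocmp.oObj α) then ⊥
    else E.ac.Sig A (E.cocmp.oObj α) h
      (D.map (prod.map (𝟙 A) (E.cocmp.oArr α)) (E.elem.eq A) ⊓ D.map prod.snd γ),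
    ?_, ?_⟩
  · intro A α γ β
    by_cases h : StableInitial (E.cocmp.oObj α)
    · simp only [dif_pos h]
      exact ⟨fun _ => Statement15Aux.le_P_si E h.1.some _ _, fun _ => bot_le⟩
    · simp only [dif_neg h]
      exact Statement15Aux.adj_graph E map_inf h (E.cocmp.oArr α) γ β
  · intro X A f α q hq β
    by_cases hA : StableInitial (E.cocmp.oObj α)
    · have hX : StableInitial (E.cocmp.oObj (D.map f α)) := Statement15Aux.si_of_hom q hA
      simp only [dif_pos hA, dif_pos hX]
      exact Statement15Aux.bot_map E map_inf f
    · by_cases hX : StableInitial (E.cocmp.oObj (D.map f α))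
      · simp only [dif_neg hA, dif_pos hX]
        rw [Statement15Aux.G_inf E map_inf (E.cocmp.oArr α) β,
          Statement15Aux.frobenius E map_inf hA _ β, map_inf]
        refine le_antisymm ?_ bot_le
        have hI := hX.1.some
        refine le_trans (le_inf inf_le_left (Statement15Aux.le_max E hI _)) ?_
        rw [← map_inf]
        have h1 : E.ac.Sig A _ hA
            (D.map (prod.map (𝟙 A) (E.cocmp.oArr α)) (E.elem.eq A)) ⊓ α
            ≤ (⊥ : P A) := by
          rw [← Statement15Aux.frobenius E map_inf hA _ α, ← Statement15Aux.G_inf E map_inf (E.cocmp.oArr α) α]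
          refine (Statement15Aux.adj_graph E map_inf hA (E.cocmp.oArr α) _ ⊥).mpr ?_
          rw [E.cocmp.map_oArr]
          exact bot_le
        exact le_trans (D.map_mono f h1) (le_of_eq (Statement15Aux.bot_map E map_inf f))
      · simp only [dif_neg hA, dif_neg hX]
        have harg : D.map q (D.map (E.cocmp.oArr α) β)
            = D.map (E.cocmp.oArr (D.map f α)) (D.map f β) := by
          rw [← D.map_comp, hq, D.map_comp]
        rw [harg, Statement15Aux.G_inf E map_inf (E.cocmp.oArr α) β, Statement15Aux.frobenius E map_inf hA _ β,
          map_inf, Statement15Aux.G_inf E map_inf (E.cocmp.oArr (D.map f α)) (D.map f β),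
          Statement15Aux.frobenius E map_inf hX _ (D.map f β), E.ac.eps_spec hA,
          E.ac.eps_spec hX, E.compat f α hA hX]
end

section
/- Every heaco (C,P) gives rise to a tripos (C,P^o) on the same base category, where P^o(A) = P(A)^op. -/
open CategoryTheory CategoryTheory.Limits

universe w v u

variable {C : Type u} [Category.{v} C] {P : C → Type w}

section S16Aux

open CategoryTheory CategoryTheory.Limits Classical

set_option linter.unusedSectionVars false

attribute [local simp] prod.lift_fst prod.lift_snd prod.lift_fst_assoc prod.lift_snd_assoc

variable {C : Type u} [Category.{v} C] [HasFiniteProducts C]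
  {P : C → Type w} [∀ A, SemilatticeInf (P A)] [∀ A, OrderBot (P A)]
  {D : Doctrine C P}

/-- compose maps -/
lemma S16.dmm {X Y A : C} (D : Doctrine C P) (f : X ⟶ Y) (g : Y ⟶ A) (α : P A) :
    D.map f (D.map g α) = D.map (f ≫ g) α := (D.map_comp f g α).symm

lemma S16.mpe {X A : C} (D : Doctrine C P) {f g : X ⟶ A} (α : P A) (h : f = g) :
    D.map f α = D.map g α := by rw [h]

variable (H : Heaco D)
variable (minf : ∀ {X A : C} (f : X ⟶ A) (α β : P A),
    D.map f (α ⊓ β) = D.map f α ⊓ D.map f β)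

namespace S16

include H minf

/-- every predicate is below the pulled-back equality along `⟨snd,snd⟩` -/
lemma le_eq_snd {X A : C} (ψ : P (X ⨯ A)) :
    ψ ≤ D.map (prod.lift prod.snd prod.snd) (H.eaco.elem.eq A) := by
  have h := (H.eaco.elem.eq_adj X A ψ
      (D.map prod.fst ψ ⊓ D.map (prod.map prod.snd (𝟙 A)) (H.eaco.elem.eq A))).mp le_rfl
  rw [minf] at h
  have h1 : D.map (prod.lift (𝟙 (X ⨯ A)) prod.snd) (D.map prod.fst ψ) = ψ := by
    rw [dmm]
    rw [mpe D _ (show prod.lift (𝟙 (X ⨯ A)) prod.snd ≫ prod.fst = 𝟙 _ by simp)]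
    exact D.map_id ψ
  have h2 : D.map (prod.lift (𝟙 (X ⨯ A)) prod.snd)
      (D.map (prod.map prod.snd (𝟙 A)) (H.eaco.elem.eq A))
      = D.map (prod.lift prod.snd prod.snd) (H.eaco.elem.eq A) := by
    rw [dmm]
    exact mpe D _ (by simp)
  rw [h1, h2] at h
  exact (le_inf_iff.mp h).2

/-- the fiberwise top element -/
noncomputable def topP (X : C) : P X :=
  D.map (prod.lift (𝟙 X) (𝟙 X)) (H.eaco.elem.eq X)

lemma le_graph {Z B : C} (g : Z ⟶ B) (β : P Z) :
    β ≤ D.map (prod.lift g g) (H.eaco.elem.eq B) := by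
  have e0 : β = D.map (prod.lift (𝟙 Z) g) (D.map prod.fst β) := by
    rw [dmm, mpe D _ (show prod.lift (𝟙 Z) g ≫ prod.fst = 𝟙 _ by simp), D.map_id]
  rw [e0]
  have := D.map_mono (prod.lift (𝟙 Z) g) (le_eq_snd H minf (D.map prod.fst β))
  refine le_trans this (le_of_eq ?_)
  rw [dmm]
  exact mpe D _ (by ext <;> simp)

lemma le_topP {X : C} (α : P X) : α ≤ topP H X := le_graph H minf (𝟙 X) α

lemma graph_top {Z B : C} (g : Z ⟶ B) :
    D.map (prod.lift g g) (H.eaco.elem.eq B) = topP H Z :=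
  le_antisymm (le_topP H minf _) (le_graph H minf g _)

lemma map_topP {X A : C} (f : X ⟶ A) : D.map f (topP H A) = topP H X := by
  rw [topP, dmm, mpe D _ (show f ≫ prod.lift (𝟙 A) (𝟙 A) = prod.lift f f by simp)]
  exact graph_top H minf f

/-- parametric transport, raw form -/
lemma PT {X' A : C} (φ : P ((X' ⨯ A) ⨯ A)) :
    D.map (prod.lift (prod.fst : (X' ⨯ A) ⨯ A ⟶ X' ⨯ A)
      ((prod.fst : (X' ⨯ A) ⨯ A ⟶ X' ⨯ A) ≫ prod.snd)) φ ⊓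
      D.map (prod.map prod.snd (𝟙 A)) (H.eaco.elem.eq A) ≤ φ := by
  have h := (H.eaco.elem.eq_adj X' A (D.map (prod.lift (𝟙 (X' ⨯ A)) (prod.snd : X' ⨯ A ⟶ A)) φ) φ).mpr le_rfl
  have e : D.map ((prod.fst : (X' ⨯ A) ⨯ A ⟶ X' ⨯ A)) (D.map (prod.lift (𝟙 (X' ⨯ A)) (prod.snd : X' ⨯ A ⟶ A)) φ)
      = D.map (prod.lift prod.fst (prod.fst ≫ prod.snd)) φ := by
    rw [dmm]; exact mpe D _ (by ext <;> simp)
  rwa [e] at h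

/-- parametric transport along equality -/
lemma GT {Z X' A : C} (x : Z ⟶ X') (a a' : Z ⟶ A) (φ : P ((X' ⨯ A) ⨯ A)) :
    D.map (prod.lift (prod.lift x a) a) φ ⊓ D.map (prod.lift a a') (H.eaco.elem.eq A) ≤
      D.map (prod.lift (prod.lift x a) a') φ := by
  have h := D.map_mono (prod.lift (prod.lift x a) a') (PT H minf φ)
  rw [minf, dmm, dmm] at h
  rw [mpe D φ (show prod.lift (prod.lift x a) a' ≫ prod.lift prod.fst (prod.fst ≫ prod.snd)
      = prod.lift (prod.lift x a) a by ext <;> simp)] at h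
  rw [mpe D _ (show prod.lift (prod.lift x a) a' ≫ prod.map prod.snd (𝟙 A)
      = prod.lift a a' by ext <;> simp)] at h
  exact h

/-- transport of a predicate along equality of two arrows -/
lemma T {Z B : C} (u v : Z ⟶ B) (γ : P B) :
    D.map u γ ⊓ D.map (prod.lift u v) (H.eaco.elem.eq B) ≤ D.map v γ := by
  have h := GT H minf (x := u) (a := u) (a' := v) (φ := D.map (prod.snd : (B ⨯ B) ⨯ B ⟶ B) γ)
  rw [dmm, dmm] at h
  rw [mpe D γ (show prod.lift (prod.lift u u) u ≫ prod.snd = u by simp)] at h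
  rw [mpe D γ (show prod.lift (prod.lift u u) v ≫ prod.snd = v by simp)] at h
  exact h

lemma eq_sym {B : C} :
    D.map (prod.lift (prod.snd : B ⨯ B ⟶ B) prod.fst) (H.eaco.elem.eq B)
      = H.eaco.elem.eq B := by
  set n : (B ⨯ B) ⨯ B ⟶ B ⨯ B :=
    prod.lift prod.snd ((prod.fst : (B ⨯ B) ⨯ B ⟶ B ⨯ B) ≫ prod.snd) with hn
  have h0 : topP H (B ⨯ B) ≤ D.map (prod.lift (𝟙 (B ⨯ B)) (prod.snd : B ⨯ B ⟶ B))
      (D.map n (H.eaco.elem.eq B)) := by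
    rw [dmm, mpe D _ (show prod.lift (𝟙 (B ⨯ B)) (prod.snd : B ⨯ B ⟶ B) ≫ n
        = prod.lift prod.snd prod.snd by rw [hn]; ext <;> simp)]
    rw [mpe D _ (show (prod.lift prod.snd prod.snd : B ⨯ B ⟶ B ⨯ B)
        = prod.snd ≫ prod.lift (𝟙 B) (𝟙 B) by ext <;> simp), ← dmm]
    rw [show D.map (prod.lift (𝟙 B) (𝟙 B)) (H.eaco.elem.eq B) = topP H B from rfl]
    rw [map_topP H minf]
  have h := (H.eaco.elem.eq_adj (B) B (topP H (B ⨯ B)) (D.map n (H.eaco.elem.eq B))).mpr h0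
  rw [map_topP H minf] at h
  have h' : D.map (prod.map prod.snd (𝟙 B)) (H.eaco.elem.eq B) ≤ D.map n (H.eaco.elem.eq B) :=
    le_trans (le_inf (le_topP H minf _) le_rfl) h
  have h2 := D.map_mono (prod.lift (𝟙 (B ⨯ B)) (prod.fst : B ⨯ B ⟶ B)) h'
  rw [dmm, dmm] at h2
  rw [mpe D _ (show prod.lift (𝟙 (B ⨯ B)) (prod.fst : B ⨯ B ⟶ B) ≫ prod.map prod.snd (𝟙 B)
      = prod.lift prod.snd prod.fst by ext <;> simp)] at h2
  rw [mpe D _ (show prod.lift (𝟙 (B ⨯ B)) (prod.fst : B ⨯ B ⟶ B) ≫ n = 𝟙 (B ⨯ B) by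
      rw [hn]; ext <;> simp), D.map_id] at h2
  refine le_antisymm h2 ?_
  have h3 := D.map_mono (prod.lift (prod.snd : B ⨯ B ⟶ B) prod.fst) h2
  rw [dmm, mpe D _ (show prod.lift (prod.snd : B ⨯ B ⟶ B) prod.fst
      ≫ prod.lift prod.snd prod.fst = 𝟙 (B ⨯ B) by ext <;> simp), D.map_id] at h3
  exact h3

lemma sympair {Z B : C} (u v : Z ⟶ B) :
    D.map (prod.lift u v) (H.eaco.elem.eq B) = D.map (prod.lift v u) (H.eaco.elem.eq B) := by
  conv_rhs => rw [← eq_sym H minf]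
  rw [dmm]
  exact mpe D _ (by ext <;> simp)

lemma graph_to_id {X : C} {g : X ⟶ X}
    (hg : D.map (prod.lift (𝟙 X) g) (H.eaco.elem.eq X) = topP H X) (γ : P X) :
    D.map g γ = γ := by
  have h1 := T H minf g (𝟙 X) γ
  rw [D.map_id, sympair H minf, hg] at h1
  have h1' : D.map g γ ≤ γ := le_trans (le_inf le_rfl (le_topP H minf _)) h1
  have h2 := T H minf (𝟙 X) g γ
  rw [D.map_id, hg] at h2
  exact le_antisymm h1' (le_trans (le_inf le_rfl (le_topP H minf _)) h2)

/-- fibers over initial objects are trivial -/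
lemma trivial_of_initial {Z : C} (hZ : IsInitial Z) : topP H Z ≤ (⊥ : P Z) := by
  set t0 := H.eaco.cocmp.oArr (topP H Z)
  set ι := hZ.to (H.eaco.cocmp.oObj (topP H Z))
  have e1 : 𝟙 Z = ι ≫ t0 := hZ.hom_ext _ _
  calc topP H Z = D.map (𝟙 Z) (topP H Z) := (D.map_id _).symm
    _ = D.map ι (D.map t0 (topP H Z)) := by rw [e1, D.map_comp]
    _ = D.map ι ⊥ := by rw [H.eaco.cocmp.map_oArr]
    _ ≤ D.map ι (D.map t0 ⊥) := D.map_mono ι bot_le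
    _ = D.map (𝟙 Z) ⊥ := by rw [dmm, ← e1]
    _ = ⊥ := D.map_id _

omit H minf in
lemma SI_of_iso {Y Z : C} (e : Y ≅ Z) (h : StableInitial Y) : StableInitial Z := by
  refine ⟨⟨h.1.some.ofIso e⟩, fun W => ⟨?_⟩⟩
  exact (prod.mapIso (Iso.refl W) e.symm) ≪≫ (h.2 W).some ≪≫ e

/-- anything mapping into a stable initial object has trivial fiber -/
lemma trivial_of_to_SI {W Z : C} (w : W ⟶ Z) (h : StableInitial Z) : topP H W ≤ (⊥ : P W) := by
  have hin : IsInitial (W ⨯ Z) := h.1.some.ofIso (h.2 W).some.symm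
  have htr := trivial_of_initial H minf hin
  calc topP H W = D.map (prod.lift (𝟙 W) w) (topP H (W ⨯ Z)) := (map_topP H minf _).symm
    _ ≤ D.map (prod.lift (𝟙 W) w) ⊥ := D.map_mono _ htr
    _ ≤ D.map (prod.lift (𝟙 W) w) (D.map prod.fst ⊥) := D.map_mono _ bot_le
    _ = D.map (𝟙 W) ⊥ := by rw [dmm]; exact mpe D _ (by simp)
    _ = ⊥ := D.map_id _

/-- if the co-comprehension object of `β` is stable initial then `β` is the top -/
lemma top_le_of_SI {X : C} (β : P X) (h : StableInitial (H.eaco.cocmp.oObj β)) :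
    topP H X ≤ β := by
  have htriv : D.map (H.eaco.cocmp.oArr β) (topP H X) = ⊥ := by
    refine le_antisymm ?_ bot_le
    rw [map_topP H minf]
    exact trivial_of_initial H minf h.1.some
  obtain ⟨k, hk, -⟩ := H.eaco.cocmp.univ (topP H X) (H.eaco.cocmp.oArr β) htriv
  exact H.eaco.full X (topP H X) β k hk

omit minf in
lemma kbot_exists (X : C) :
    ∃ k : X ⟶ H.eaco.cocmp.oObj (⊥ : P X), k ≫ H.eaco.cocmp.oArr (⊥ : P X) = 𝟙 X :=
  (H.eaco.cocmp.univ (⊥ : P X) (𝟙 X) (D.map_id ⊥)).exists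

/-- the co-comprehension arrow of `⊥` is an isomorphism -/
noncomputable def oArrBotIso (X : C) : H.eaco.cocmp.oObj (⊥ : P X) ≅ X where
  hom := H.eaco.cocmp.oArr (⊥ : P X)
  inv := (kbot_exists H X).choose
  hom_inv_id := by
    have u := H.eaco.cocmp.univ (⊥ : P X) (H.eaco.cocmp.oArr (⊥ : P X))
      (H.eaco.cocmp.map_oArr ⊥)
    refine (u.unique ?_ ?_)
    · rw [Category.assoc, (kbot_exists H X).choose_spec, Category.comp_id]
    · rw [Category.id_comp]
  inv_hom_id := (kbot_exists H X).choose_spec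

omit minf in
lemma not_SI_oObj_bot {A : C} (hA : ¬ StableInitial A) :
    ¬ StableInitial (H.eaco.cocmp.oObj (⊥ : P A)) :=
  fun h => hA (SI_of_iso (oArrBotIso H A) h)

/-- totalized Σ along the first projection -/
noncomputable def SigP (Γ A : C) (ψ : P (Γ ⨯ A)) : P Γ :=
  if h : StableInitial A then ⊥ else H.eaco.ac.Sig Γ A h ψ

lemma SigP_adj {Γ A : C} (ψ : P (Γ ⨯ A)) (β : P Γ) :
    SigP H Γ A ψ ≤ β ↔ ψ ≤ D.map prod.fst β := by
  by_cases h : StableInitial A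
  · rw [SigP, dif_pos h]
    refine iff_of_true bot_le ?_
    have htr : topP H (Γ ⨯ A) ≤ ⊥ := trivial_of_to_SI H minf prod.snd h
    exact le_trans (le_topP H minf _) (le_trans htr bot_le)
  · rw [SigP, dif_neg h]
    exact H.eaco.ac.adj h ψ β

lemma SigP_mono {Γ A : C} {ψ ψ' : P (Γ ⨯ A)} (h : ψ ≤ ψ') :
    SigP H Γ A ψ ≤ SigP H Γ A ψ' :=
  (SigP_adj H minf ψ _).mpr (le_trans h ((SigP_adj H minf ψ' _).mp le_rfl))

lemma SigP_graph {Γ A : C} (g : Γ ⟶ A) (ψ : P (Γ ⨯ A)) :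
    D.map (prod.lift (𝟙 Γ) g) ψ ≤ SigP H Γ A ψ := by
  have h0 : ψ ≤ D.map prod.fst (SigP H Γ A ψ) := (SigP_adj H minf ψ _).mp le_rfl
  have := D.map_mono (prod.lift (𝟙 Γ) g) h0
  rw [dmm, mpe D _ (show prod.lift (𝟙 Γ) g ≫ prod.fst = 𝟙 Γ by simp), D.map_id] at this
  exact this

omit minf in
lemma SigP_nonSI {Γ A : C} (h : ¬ StableInitial A) (ψ : P (Γ ⨯ A)) :
    SigP H Γ A ψ = D.map (prod.lift (𝟙 Γ) (H.eaco.ac.eps h ψ)) ψ := by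
  rw [SigP, dif_neg h]
  exact H.eaco.ac.eps_spec h ψ

lemma SigP_bc_nonSI {Γ Δ A : C} (h : ¬ StableInitial A) (f : Δ ⟶ Γ) (ψ : P (Γ ⨯ A)) :
    D.map f (SigP H Γ A ψ) = SigP H Δ A (D.map (prod.map f (𝟙 A)) ψ) := by
  refine le_antisymm ?_ ?_
  · rw [SigP_nonSI H h ψ, dmm]
    rw [mpe D _ (show f ≫ prod.lift (𝟙 Γ) (H.eaco.ac.eps h ψ)
        = prod.lift (𝟙 Δ) (f ≫ H.eaco.ac.eps h ψ) ≫ prod.map f (𝟙 A) by ext <;> simp)]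
    rw [← dmm]
    exact SigP_graph H minf _ _
  · rw [SigP_adj H minf]
    have h0 : ψ ≤ D.map prod.fst (SigP H Γ A ψ) := (SigP_adj H minf ψ _).mp le_rfl
    have := D.map_mono (prod.map f (𝟙 A)) h0
    rw [dmm, mpe D _ (show prod.map f (𝟙 A) ≫ prod.fst = prod.fst ≫ f by simp), ← dmm] at this
    exact this

lemma paireq {Z B B' : C} (p₁ p₂ : Z ⟶ B) (q₁ q₂ : Z ⟶ B') :
    D.map (prod.lift p₁ p₂) (H.eaco.elem.eq B) ⊓ D.map (prod.lift q₁ q₂) (H.eaco.elem.eq B') ≤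
      D.map (prod.lift (prod.lift p₁ q₁) (prod.lift p₂ q₂)) (H.eaco.elem.eq (B ⨯ B')) := by
  set m : Z ⟶ B ⨯ B' := prod.lift p₁ q₁ with hm
  set w₁ : ((B ⨯ B') ⨯ B) ⨯ B ⟶ (B ⨯ B') ⨯ (B ⨯ B') :=
    prod.lift (prod.fst ≫ prod.fst)
      (prod.lift prod.snd (prod.fst ≫ prod.fst ≫ prod.snd)) with hw₁
  have s1 := GT H minf (x := m) (a := p₁) (a' := p₂)
    (φ := D.map w₁ (H.eaco.elem.eq (B ⨯ B')))
  rw [dmm, dmm] at s1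
  rw [mpe D _ (show prod.lift (prod.lift m p₁) p₁ ≫ w₁ = prod.lift m m by
      rw [hw₁]; ext <;> simp [hm])] at s1
  rw [mpe D _ (show prod.lift (prod.lift m p₁) p₂ ≫ w₁ = prod.lift m (prod.lift p₂ q₁) by
      rw [hw₁]; ext <;> simp [hm])] at s1
  rw [graph_top H minf] at s1
  have s1' : D.map (prod.lift p₁ p₂) (H.eaco.elem.eq B)
      ≤ D.map (prod.lift m (prod.lift p₂ q₁)) (H.eaco.elem.eq (B ⨯ B')) :=
    le_trans (le_inf (le_topP H minf _) le_rfl) s1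
  set w₂ : (((B ⨯ B') ⨯ B) ⨯ B') ⨯ B' ⟶ (B ⨯ B') ⨯ (B ⨯ B') :=
    prod.lift (prod.fst ≫ prod.fst ≫ prod.fst)
      (prod.lift (prod.fst ≫ prod.fst ≫ prod.snd) prod.snd) with hw₂
  have s2 := GT H minf (x := prod.lift m p₂) (a := q₁) (a' := q₂)
    (φ := D.map w₂ (H.eaco.elem.eq (B ⨯ B')))
  rw [dmm, dmm] at s2
  rw [mpe D _ (show prod.lift (prod.lift (prod.lift m p₂) q₁) q₁ ≫ w₂
      = prod.lift m (prod.lift p₂ q₁) by rw [hw₂]; ext <;> simp)] at s2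
  rw [mpe D _ (show prod.lift (prod.lift (prod.lift m p₂) q₁) q₂ ≫ w₂
      = prod.lift m (prod.lift p₂ q₂) by rw [hw₂]; ext <;> simp)] at s2
  exact le_trans (inf_le_inf_right _ s1') s2

lemma corner_trivial {X A : C} (f : X ⟶ A) (hX : ¬ StableInitial X)
    (hfb : D.map f (⊥ : P A) = topP H X) : topP H X ≤ (⊥ : P X) := by
  have hbX : D.map (terminal.from X) (⊥ : P (⊤_ C)) = topP H X := by
    refine le_antisymm (le_topP H minf _) ?_
    rw [show terminal.from X = f ≫ terminal.from A from Subsingleton.elim _ _, D.map_comp]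
    calc topP H X = D.map f ⊥ := hfb.symm
      _ ≤ D.map f (D.map (terminal.from A) ⊥) := D.map_mono f bot_le
  have hfst : D.map (prod.fst : (⊤_ C) ⨯ X ⟶ ⊤_ C) (⊥ : P (⊤_ C)) = topP H ((⊤_ C) ⨯ X) := by
    rw [mpe D _ (show (prod.fst : (⊤_ C) ⨯ X ⟶ ⊤_ C) = prod.snd ≫ terminal.from X from
      Subsingleton.elim _ _), D.map_comp, hbX, map_topP H minf]
  have htriv1 : topP H (⊤_ C) ≤ (⊥ : P (⊤_ C)) := by
    have hs : SigP H (⊤_ C) X (topP H ((⊤_ C) ⨯ X)) ≤ ⊥ :=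
      (SigP_adj H minf _ _).mpr (le_of_eq hfst.symm)
    refine le_trans ?_ hs
    calc topP H (⊤_ C)
        = D.map (prod.lift (𝟙 (⊤_ C)) (H.eaco.ac.eps hX (⊥ : P ((⊤_ C) ⨯ X))))
            (topP H ((⊤_ C) ⨯ X)) := (map_topP H minf _).symm
      _ ≤ _ := SigP_graph H minf _ _
  obtain ⟨χ₀, hχ₀⟩ := H.ho.classify X (⊤_ C) (D.map prod.fst (⊥ : P X))
  obtain ⟨χ₁, hχ₁⟩ := H.ho.classify X (⊤_ C) (D.map prod.fst (topP H X))
  have m0 : D.map (prod.lift (𝟙 X) (terminal.from X ≫ χ₀)) (H.ho.mem X) = ⊥ := by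
    rw [mpe D _ (show prod.lift (𝟙 X) (terminal.from X ≫ χ₀)
        = prod.lift (𝟙 X) (terminal.from X) ≫ prod.map (𝟙 X) χ₀ by ext <;> simp)]
    rw [D.map_comp, hχ₀, dmm,
      mpe D _ (show prod.lift (𝟙 X) (terminal.from X) ≫ prod.fst = 𝟙 X by simp), D.map_id]
  have m1 : D.map (prod.lift (𝟙 X) (terminal.from X ≫ χ₁)) (H.ho.mem X) = topP H X := by
    rw [mpe D _ (show prod.lift (𝟙 X) (terminal.from X ≫ χ₁)
        = prod.lift (𝟙 X) (terminal.from X) ≫ prod.map (𝟙 X) χ₁ by ext <;> simp)]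
    rw [D.map_comp, hχ₁, dmm,
      mpe D _ (show prod.lift (𝟙 X) (terminal.from X) ≫ prod.fst = 𝟙 X by simp), D.map_id]
  have heqq : topP H X ≤ D.map (prod.lift (prod.lift (𝟙 X) (terminal.from X ≫ χ₁))
      (prod.lift (𝟙 X) (terminal.from X ≫ χ₀))) (H.eaco.elem.eq (X ⨯ H.ho.pow X)) := by
    have hp := paireq H minf (𝟙 X) (𝟙 X) (terminal.from X ≫ χ₁) (terminal.from X ≫ χ₀)
    refine le_trans (le_inf (le_of_eq rfl) ?_) hp
    rw [mpe D _ (show prod.lift (terminal.from X ≫ χ₁) (terminal.from X ≫ χ₀)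
        = terminal.from X ≫ prod.lift χ₁ χ₀ by ext <;> simp), D.map_comp]
    calc topP H X = D.map (terminal.from X) (topP H (⊤_ C)) := (map_topP H minf _).symm
      _ ≤ D.map (terminal.from X) ⊥ := D.map_mono _ htriv1
      _ ≤ D.map (terminal.from X) (D.map (prod.lift χ₁ χ₀) (H.eaco.elem.eq _)) :=
          D.map_mono _ bot_le
  have ht := T H minf (prod.lift (𝟙 X) (terminal.from X ≫ χ₁))
    (prod.lift (𝟙 X) (terminal.from X ≫ χ₀)) (H.ho.mem X)
  rw [m0, m1] at ht
  exact le_trans (le_inf le_rfl heqq) ht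

/-- reindexing is strict: it preserves bottom elements -/
lemma strict {X A : C} (f : X ⟶ A) : D.map f (⊥ : P A) = ⊥ := by
  refine le_antisymm ?_ bot_le
  by_cases hA : StableInitial A
  · exact le_trans (le_topP H minf _) (trivial_of_to_SI H minf f hA)
  · by_cases h2 : StableInitial (H.eaco.cocmp.oObj (D.map f (⊥ : P A)))
    · have hfb : D.map f (⊥ : P A) = topP H X :=
        le_antisymm (le_topP H minf _) (top_le_of_SI H minf _ h2)
      by_cases hX : StableInitial X
      · exact le_trans (le_topP H minf _) (trivial_of_initial H minf hX.1.some)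
      · exact le_of_eq_of_le hfb (corner_trivial H minf f hX hfb)
    · have h1 : ¬ StableInitial (H.eaco.cocmp.oObj (⊥ : P A)) := not_SI_oObj_bot H hA
      have hc := H.eaco.compat f (⊥ : P A) h1 h2
      set GA := D.map (prod.map (𝟙 A) (H.eaco.cocmp.oArr (⊥ : P A))) (H.eaco.elem.eq A)
        with hGA
      set GX := D.map (prod.map (𝟙 X) (H.eaco.cocmp.oArr (D.map f (⊥ : P A))))
        (H.eaco.elem.eq X) with hGX
      have l1 : D.map (prod.lift (𝟙 A) (H.eaco.ac.eps h1 GA)) GA = topP H A := by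
        rw [← H.eaco.ac.eps_spec h1 GA]
        have hd : H.eaco.ac.Sig A _ h1 GA = SigP H A _ GA := by rw [SigP, dif_neg h1]
        rw [hd]
        refine le_antisymm (le_topP H minf _) ?_
        have e2 : D.map (prod.lift (𝟙 A) ((kbot_exists H A).choose)) GA = topP H A := by
          rw [hGA, dmm, mpe D _ (show prod.lift (𝟙 A) ((kbot_exists H A).choose)
              ≫ prod.map (𝟙 A) (H.eaco.cocmp.oArr (⊥ : P A)) = prod.lift (𝟙 A) (𝟙 A) by
                ext <;> simp [(kbot_exists H A).choose_spec])]
          rfl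
        exact le_trans (le_of_eq e2.symm) (SigP_graph H minf _ _)
      rw [l1, map_topP H minf] at hc
      have l2 : D.map (prod.lift (𝟙 X) (H.eaco.ac.eps h2 GX)) GX
          = D.map (prod.lift (𝟙 X) (H.eaco.ac.eps h2 GX
              ≫ H.eaco.cocmp.oArr (D.map f (⊥ : P A)))) (H.eaco.elem.eq X) := by
        rw [hGX, dmm]
        exact mpe D _ (by ext <;> simp)
      have hg : D.map (prod.lift (𝟙 X) (H.eaco.ac.eps h2 GX
          ≫ H.eaco.cocmp.oArr (D.map f (⊥ : P A)))) (H.eaco.elem.eq X) = topP H X := by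
        rw [← l2, ← hc]
      have hq := graph_to_id H minf hg
      have e3 : D.map f (⊥ : P A) = D.map (H.eaco.ac.eps h2 GX) ⊥ := by
        conv_lhs => rw [← hq (D.map f (⊥ : P A))]
        rw [D.map_comp, H.eaco.cocmp.map_oArr]
      rw [e3]
      calc D.map (H.eaco.ac.eps h2 GX) (⊥ : P _)
          ≤ D.map (H.eaco.ac.eps h2 GX)
              (D.map (H.eaco.cocmp.oArr (D.map f (⊥ : P A))) ⊥) := D.map_mono _ bot_le
        _ = D.map (H.eaco.ac.eps h2 GX ≫ H.eaco.cocmp.oArr (D.map f (⊥ : P A))) ⊥ :=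
            dmm D _ _ _
        _ = ⊥ := hq ⊥

/-- the complement operator -/
noncomputable def rP {X : C} (α : P X) : P X :=
  if h : StableInitial (H.eaco.cocmp.oObj α) then ⊥
  else D.map (prod.lift (𝟙 X) (H.eaco.ac.eps h
      (D.map (prod.map (𝟙 X) (H.eaco.cocmp.oArr α)) (H.eaco.elem.eq X))))
    (D.map (prod.map (𝟙 X) (H.eaco.cocmp.oArr α)) (H.eaco.elem.eq X))

omit minf in
lemma rP_SI {X : C} {α : P X} (h : StableInitial (H.eaco.cocmp.oObj α)) :
    rP H α = ⊥ := by rw [rP, dif_pos h]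

omit minf in
lemma rP_nonSI {X : C} {α : P X} (h : ¬ StableInitial (H.eaco.cocmp.oObj α)) :
    rP H α = SigP H X (H.eaco.cocmp.oObj α)
      (D.map (prod.map (𝟙 X) (H.eaco.cocmp.oArr α)) (H.eaco.elem.eq X)) := by
  rw [rP, dif_neg h, SigP, dif_neg h]
  exact (H.eaco.ac.eps_spec h _).symm

omit minf in
lemma rP_graph {X : C} {α : P X} (h : ¬ StableInitial (H.eaco.cocmp.oObj α)) :
    rP H α = D.map (prod.lift (𝟙 X)
      (H.eaco.ac.eps h (D.map (prod.map (𝟙 X) (H.eaco.cocmp.oArr α)) (H.eaco.elem.eq X))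
        ≫ H.eaco.cocmp.oArr α)) (H.eaco.elem.eq X) := by
  rw [rP, dif_neg h, dmm]
  exact mpe D _ (by ext <;> simp)

lemma R1 {X : C} (α : P X) : α ⊓ rP H α ≤ ⊥ := by
  by_cases h : StableInitial (H.eaco.cocmp.oObj α)
  · rw [rP_SI H h]; exact inf_le_right
  · rw [rP_graph H h]
    have ht := T H minf (𝟙 X)
      (H.eaco.ac.eps h (D.map (prod.map (𝟙 X) (H.eaco.cocmp.oArr α)) (H.eaco.elem.eq X))
        ≫ H.eaco.cocmp.oArr α) α
    rw [D.map_id] at ht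
    refine le_trans ht (le_of_eq ?_)
    rw [D.map_comp, H.eaco.cocmp.map_oArr]
    exact strict H minf _

lemma TOT {X Y : C} {α : P X} (h : ¬ StableInitial (H.eaco.cocmp.oObj α))
    (y : Y ⟶ X) (hy : D.map y α = ⊥) : topP H Y ≤ D.map y (rP H α) := by
  rw [rP_nonSI H h, SigP_bc_nonSI H minf h y _]
  obtain ⟨k, hk, -⟩ := H.eaco.cocmp.univ α y hy
  have e : D.map (prod.lift (𝟙 Y) k) (D.map (prod.map y (𝟙 _))
      (D.map (prod.map (𝟙 X) (H.eaco.cocmp.oArr α)) (H.eaco.elem.eq X))) = topP H Y := by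
    rw [dmm, dmm, mpe D _ (show (prod.lift (𝟙 Y) k ≫ prod.map y (𝟙 _))
        ≫ prod.map (𝟙 X) (H.eaco.cocmp.oArr α) = prod.lift y y by
          ext <;> simp [hk])]
    exact graph_top H minf y
  exact le_trans (le_of_eq e.symm) (SigP_graph H minf k _)

lemma rr_le {X : C} (α : P X) : rP H (rP H α) ≤ α := by
  by_cases h : StableInitial (H.eaco.cocmp.oObj α)
  · exact le_trans (le_topP H minf _) (top_le_of_SI H minf α h)
  · by_cases h' : StableInitial (H.eaco.cocmp.oObj (rP H α))
    · rw [rP_SI H h']; exact bot_le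
    · have t1 : topP H _ ≤ D.map (H.eaco.cocmp.oArr α) (rP H α) :=
        TOT H minf h (H.eaco.cocmp.oArr α) (H.eaco.cocmp.map_oArr α)
      have ha : D.map (H.eaco.cocmp.oArr α) (rP H (rP H α)) = ⊥ := by
        refine le_antisymm ?_ bot_le
        have h2 := D.map_mono (H.eaco.cocmp.oArr α) (R1 H minf (rP H α))
        rw [minf, strict H minf] at h2
        exact le_trans (le_inf (le_trans (le_topP H minf _) t1) le_rfl) h2
      obtain ⟨k, hk, -⟩ := H.eaco.cocmp.univ (rP H (rP H α)) (H.eaco.cocmp.oArr α) ha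
      exact H.eaco.full X (rP H (rP H α)) α k hk

lemma R2 {X : C} {γ α : P X} (hga : γ ⊓ α ≤ ⊥) : γ ≤ rP H α := by
  by_cases h : StableInitial (H.eaco.cocmp.oObj α)
  · have hb : γ ≤ ⊥ :=
      le_trans (le_inf le_rfl (le_trans (le_topP H minf _) (top_le_of_SI H minf α h))) hga
    exact le_trans hb bot_le
  · by_cases h' : StableInitial (H.eaco.cocmp.oObj (rP H α))
    · exact le_trans (le_topP H minf _) (top_le_of_SI H minf _ h')
    · have t2 : topP H _ ≤ D.map (H.eaco.cocmp.oArr (rP H α)) (rP H (rP H α)) :=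
        TOT H minf h' (H.eaco.cocmp.oArr (rP H α)) (H.eaco.cocmp.map_oArr _)
      have t3 : topP H _ ≤ D.map (H.eaco.cocmp.oArr (rP H α)) α :=
        le_trans t2 (D.map_mono _ (rr_le H minf α))
      have hu : D.map (H.eaco.cocmp.oArr (rP H α)) γ = ⊥ := by
        refine le_antisymm ?_ bot_le
        calc D.map (H.eaco.cocmp.oArr (rP H α)) γ
            = D.map (H.eaco.cocmp.oArr (rP H α)) γ ⊓ D.map (H.eaco.cocmp.oArr (rP H α)) α :=
              (inf_eq_left.mpr (le_trans (le_topP H minf _) t3)).symm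
          _ = D.map (H.eaco.cocmp.oArr (rP H α)) (γ ⊓ α) := (minf _ _ _).symm
          _ ≤ D.map (H.eaco.cocmp.oArr (rP H α)) ⊥ := D.map_mono _ hga
          _ = ⊥ := strict H minf _
      obtain ⟨k, hk, -⟩ := H.eaco.cocmp.univ γ (H.eaco.cocmp.oArr (rP H α)) hu
      exact H.eaco.full X γ (rP H α) k hk

lemma le_rr {X : C} (α : P X) : α ≤ rP H (rP H α) := R2 H minf (R1 H minf α)

lemma rr_eq {X : C} (α : P X) : rP H (rP H α) = α :=
  le_antisymm (rr_le H minf α) (le_rr H minf α)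

lemma galois {X : C} {γ α : P X} : γ ≤ rP H α ↔ γ ⊓ α ≤ ⊥ := by
  constructor
  · intro h
    calc γ ⊓ α ≤ rP H α ⊓ α := inf_le_inf_right α h
      _ = α ⊓ rP H α := inf_comm _ _
      _ ≤ ⊥ := R1 H minf α
  · exact R2 H minf

lemma r_antitone {X : C} {α β : P X} (h : α ≤ β) : rP H β ≤ rP H α := by
  refine R2 H minf ?_
  calc rP H β ⊓ α ≤ rP H β ⊓ β := inf_le_inf_left _ h
    _ = β ⊓ rP H β := inf_comm _ _
    _ ≤ ⊥ := R1 H minf β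

lemma r_bot {X : C} : rP H (⊥ : P X) = topP H X := by
  by_cases h : StableInitial (H.eaco.cocmp.oObj (⊥ : P X))
  · rw [rP_SI H h]
    exact (le_antisymm (le_trans (le_topP H minf _) (top_le_of_SI H minf _ h)) bot_le).symm
  · rw [rP_nonSI H h]
    refine le_antisymm (le_topP H minf _) ?_
    have e2 : D.map (prod.lift (𝟙 X) ((kbot_exists H X).choose))
        (D.map (prod.map (𝟙 X) (H.eaco.cocmp.oArr (⊥ : P X))) (H.eaco.elem.eq X))
        = topP H X := by
      rw [dmm, mpe D _ (show prod.lift (𝟙 X) ((kbot_exists H X).choose)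
          ≫ prod.map (𝟙 X) (H.eaco.cocmp.oArr (⊥ : P X)) = prod.lift (𝟙 X) (𝟙 X) by
            ext <;> simp [(kbot_exists H X).choose_spec])]
      rfl
    exact le_trans (le_of_eq e2.symm) (SigP_graph H minf _ _)

lemma r_top {X : C} : rP H (topP H X) = ⊥ := by
  by_cases h : StableInitial (H.eaco.cocmp.oObj (topP H X))
  · exact rP_SI H h
  · rw [rP_nonSI H h]
    refine le_antisymm ?_ bot_le
    have e4 : topP H (H.eaco.cocmp.oObj (topP H X)) = (⊥ : P _) :=
      (map_topP H minf (H.eaco.cocmp.oArr (topP H X))).symm.trans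
        (H.eaco.cocmp.map_oArr _)
    have e5 : D.map (H.eaco.cocmp.oArr (topP H X)) (⊥ : P X) = topP H _ :=
      le_antisymm (le_topP H minf _) (le_of_eq_of_le e4 bot_le)
    refine (SigP_adj H minf _ _).mpr ?_
    have ht := T H minf (prod.snd ≫ H.eaco.cocmp.oArr (topP H X))
      (prod.fst : X ⨯ H.eaco.cocmp.oObj (topP H X) ⟶ X) (⊥ : P X)
    refine le_trans (le_inf ?_ ?_) ht
    · rw [← dmm, e5, map_topP H minf]
      exact le_topP H minf _
    · rw [sympair H minf]
      exact le_of_eq (mpe D _ (by ext <;> simp))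

lemma R4 {X A : C} (f : X ⟶ A) (α : P A) :
    D.map f (rP H α) = rP H (D.map f α) := by
  by_cases h1 : StableInitial (H.eaco.cocmp.oObj α)
  · have hα : α = topP H A :=
      le_antisymm (le_topP H minf _) (top_le_of_SI H minf α h1)
    have e : D.map f α = topP H X := by rw [hα]; exact map_topP H minf f
    rw [rP_SI H h1, strict H minf f, e, r_top H minf]
  · by_cases h2 : StableInitial (H.eaco.cocmp.oObj (D.map f α))
    · have e : D.map f α = topP H X :=
        le_antisymm (le_topP H minf _) (top_le_of_SI H minf _ h2)
      rw [rP_SI H h2]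
      refine le_antisymm ?_ bot_le
      have hb := D.map_mono f (R1 H minf α)
      rw [minf, strict H minf f, e] at hb
      exact le_trans (le_inf (le_topP H minf _) le_rfl) hb
    · simp only [rP]
      rw [dif_neg h1, dif_neg h2]
      exact H.eaco.compat f α h1 h2

/-- joins via De Morgan -/
noncomputable def supP {X : C} (a b : P X) : P X := rP H (rP H a ⊓ rP H b)

lemma le_supP_left {X : C} (a b : P X) : a ≤ supP H a b := by
  refine R2 H minf ?_
  calc a ⊓ (rP H a ⊓ rP H b) ≤ a ⊓ rP H a := inf_le_inf_left a inf_le_left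
    _ ≤ ⊥ := R1 H minf a

lemma le_supP_right {X : C} (a b : P X) : b ≤ supP H a b := by
  refine R2 H minf ?_
  calc b ⊓ (rP H a ⊓ rP H b) ≤ b ⊓ rP H b := inf_le_inf_left b inf_le_right
    _ ≤ ⊥ := R1 H minf b

lemma supP_le {X : C} {a b c : P X} (ha : a ≤ c) (hb : b ≤ c) : supP H a b ≤ c := by
  have h1 : rP H c ≤ rP H a ⊓ rP H b :=
    le_inf (r_antitone H minf ha) (r_antitone H minf hb)
  calc supP H a b ≤ rP H (rP H c) := r_antitone H minf h1
    _ = c := rr_eq H minf c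

lemma map_supP {X A : C} (f : X ⟶ A) (a b : P A) :
    D.map f (supP H a b) = supP H (D.map f a) (D.map f b) := by
  simp only [supP]
  rw [R4 H minf, minf, R4 H minf, R4 H minf]

lemma himp_adj' {X : C} (γ α β : P X) :
    β ⊓ rP H α ≤ γ ↔ β ≤ supP H γ α := by
  constructor
  · intro h
    refine R2 H minf ?_
    have h2 : β ⊓ (rP H γ ⊓ rP H α) ≤ (β ⊓ rP H α) ⊓ rP H γ :=
      le_inf (le_inf inf_le_left (le_trans inf_le_right inf_le_right))
        (le_trans inf_le_right inf_le_left)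
    refine le_trans h2 (le_trans (inf_le_inf_right (rP H γ) h) ?_)
    exact R1 H minf γ
  · intro h
    have hb : β ⊓ (rP H γ ⊓ rP H α) ≤ ⊥ := (galois H minf).mp h
    have h2 : (β ⊓ rP H α) ⊓ rP H γ ≤ β ⊓ (rP H γ ⊓ rP H α) :=
      le_inf (le_trans inf_le_left inf_le_left)
        (le_inf inf_le_right (le_trans inf_le_left inf_le_right))
    have h3 : β ⊓ rP H α ≤ rP H (rP H γ) := R2 H minf (le_trans h2 hb)
    rwa [rr_eq H minf] at h3

/-- transport along the diagonal -/
lemma eqtrans {X : C} (α : P (X ⨯ X)) :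
    α ⊓ H.eaco.elem.eq X ≤ D.map (prod.lift prod.fst prod.fst) α := by
  have h := GT H minf (x := (prod.fst : X ⨯ X ⟶ X)) (a := (prod.snd : X ⨯ X ⟶ X))
    (a' := (prod.fst : X ⨯ X ⟶ X))
    (φ := D.map (prod.lift ((prod.fst : (X ⨯ X) ⨯ X ⟶ X ⨯ X) ≫ prod.fst) prod.snd) α)
  rw [dmm, dmm] at h
  rw [mpe D _ (show prod.lift (prod.lift prod.fst prod.snd) prod.snd
      ≫ prod.lift ((prod.fst : (X ⨯ X) ⨯ X ⟶ X ⨯ X) ≫ prod.fst) prod.snd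
      = 𝟙 (X ⨯ X) by ext <;> simp), D.map_id] at h
  rw [mpe D _ (show prod.lift (prod.lift prod.fst prod.snd) prod.fst
      ≫ prod.lift ((prod.fst : (X ⨯ X) ⨯ X ⟶ X ⨯ X) ≫ prod.fst) prod.snd
      = prod.lift prod.fst prod.fst by ext <;> simp)] at h
  rw [sympair H minf, mpe D _ (show prod.lift (prod.fst : X ⨯ X ⟶ X) prod.snd
      = 𝟙 (X ⨯ X) by ext <;> simp), D.map_id] at h
  exact h

lemma eq_spec' {X : C} (α : P (X ⨯ X)) :
    D.map (prod.lift (𝟙 X) (𝟙 X)) α ≤ ⊥ ↔ α ≤ rP H (H.eaco.elem.eq X) := by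
  constructor
  · intro h
    refine R2 H minf ?_
    calc α ⊓ H.eaco.elem.eq X ≤ D.map (prod.lift prod.fst prod.fst) α := eqtrans H minf α
      _ = D.map prod.fst (D.map (prod.lift (𝟙 X) (𝟙 X)) α) := by
          rw [dmm]; exact mpe D _ (by ext <;> simp)
      _ ≤ D.map prod.fst ⊥ := D.map_mono _ (le_antisymm h bot_le ▸ le_rfl)
      _ = ⊥ := strict H minf _
  · intro h
    calc D.map (prod.lift (𝟙 X) (𝟙 X)) α
        ≤ D.map (prod.lift (𝟙 X) (𝟙 X)) (rP H (H.eaco.elem.eq X)) := D.map_mono _ h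
      _ = rP H (D.map (prod.lift (𝟙 X) (𝟙 X)) (H.eaco.elem.eq X)) := R4 H minf _ _
      _ = rP H (topP H X) := rfl
      _ = ⊥ := r_top H minf

lemma SigP_bc {Γ Δ A : C} (f : Δ ⟶ Γ) (ψ : P (Γ ⨯ A)) :
    D.map f (SigP H Γ A ψ) = SigP H Δ A (D.map (prod.map f (𝟙 A)) ψ) := by
  by_cases h : StableInitial A
  · rw [SigP, dif_pos h, SigP, dif_pos h, strict H minf f]
  · exact SigP_bc_nonSI H minf h f ψ

/-- universal quantification -/
noncomputable def PiP (Γ A : C) (ψ : P (Γ ⨯ A)) : P Γ := rP H (SigP H Γ A (rP H ψ))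

lemma PiP_adj {Γ A : C} (ψ : P (Γ ⨯ A)) (β : P Γ) :
    β ≤ PiP H Γ A ψ ↔ D.map prod.fst β ≤ ψ := by
  rw [PiP]
  rw [galois H minf]
  rw [show (β ⊓ SigP H Γ A (rP H ψ) ≤ ⊥) ↔ (SigP H Γ A (rP H ψ) ⊓ β ≤ ⊥) by
    rw [inf_comm]]
  rw [← galois H minf]
  rw [SigP_adj H minf]
  rw [R4 H minf]
  rw [galois H minf]
  rw [show (rP H ψ ⊓ D.map prod.fst β ≤ ⊥) ↔ (D.map prod.fst β ⊓ rP H ψ ≤ ⊥) by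
    rw [inf_comm]]
  rw [← galois H minf, rr_eq H minf]

lemma PiP_bc {Γ Δ A : C} (f : Δ ⟶ Γ) (ψ : P (Γ ⨯ A)) :
    D.map f (PiP H Γ A ψ) = PiP H Δ A (D.map (prod.map f (𝟙 A)) ψ) := by
  simp only [PiP]
  rw [R4 H minf, SigP_bc H minf, R4 H minf]

end S16
end S16Aux

/-- Every heaco `(C,P)` gives rise to a tripos `(C,P^o)` on the
same base category, where `P^o(A) = P(A)^op`. -/
theorem statement16 {C : Type u} [Category.{v} C] [HasFiniteProducts C]
    {P : C → Type w} [∀ A, SemilatticeInf (P A)] [∀ A, OrderBot (P A)]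
    (D : Doctrine C P)
    (map_inf : ∀ {X A : C} (f : X ⟶ A) (α β : P A),
      D.map f (α ⊓ β) = D.map f α ⊓ D.map f β)
    (H : Heaco D) : Nonempty (Tripos D.op) := by
  classical
  refine ⟨{
    inf := fun {A} a b =>
      OrderDual.toDual (S16.supP H (OrderDual.ofDual a) (OrderDual.ofDual b))
    sup := fun {A} a b =>
      OrderDual.toDual ((OrderDual.ofDual a) ⊓ (OrderDual.ofDual b))
    himp := fun {A} a b =>
      OrderDual.toDual ((OrderDual.ofDual b) ⊓ S16.rP H (OrderDual.ofDual a))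
    top := fun A => OrderDual.toDual (⊥ : P A)
    bot := fun A => OrderDual.toDual (S16.topP H A)
    inf_le_left := fun {A} a b =>
      S16.le_supP_left H map_inf (OrderDual.ofDual a) (OrderDual.ofDual b)
    inf_le_right := fun {A} a b =>
      S16.le_supP_right H map_inf (OrderDual.ofDual a) (OrderDual.ofDual b)
    le_inf := fun {A} γ a b h1 h2 => S16.supP_le H map_inf h1 h2
    le_sup_left := fun {A} a b =>
      (inf_le_left : (OrderDual.ofDual a) ⊓ (OrderDual.ofDual b) ≤ _)
    le_sup_right := fun {A} a b =>
      (inf_le_right : (OrderDual.ofDual a) ⊓ (OrderDual.ofDual b) ≤ _)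
    sup_le := fun {A} a b γ h1 h2 =>
      (le_inf (h1 : (OrderDual.ofDual γ) ≤ _) h2 :
        (OrderDual.ofDual γ) ≤ (OrderDual.ofDual a) ⊓ (OrderDual.ofDual b))
    le_top := fun {A} a => (bot_le : (⊥ : P A) ≤ OrderDual.ofDual a)
    bot_le := fun {A} a => S16.le_topP H map_inf (OrderDual.ofDual a)
    himp_adj := fun {A} γ a b =>
      S16.himp_adj' H map_inf (OrderDual.ofDual γ) (OrderDual.ofDual a)
        (OrderDual.ofDual b)
    map_inf := fun {X A} f a b =>
      congrArg OrderDual.toDual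
        (S16.map_supP H map_inf f (OrderDual.ofDual a) (OrderDual.ofDual b))
    map_sup := fun {X A} f a b =>
      congrArg OrderDual.toDual (map_inf f (OrderDual.ofDual a) (OrderDual.ofDual b))
    map_himp := fun {X A} f a b => by
      refine congrArg OrderDual.toDual ?_
      show D.map f ((OrderDual.ofDual b) ⊓ S16.rP H (OrderDual.ofDual a))
          = D.map f (OrderDual.ofDual b) ⊓ S16.rP H (D.map f (OrderDual.ofDual a))
      rw [map_inf, S16.R4 H map_inf]
    map_top := fun {X A} f => congrArg OrderDual.toDual (S16.strict H map_inf f)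
    map_bot := fun {X A} f => congrArg OrderDual.toDual (S16.map_topP H map_inf f)
    Sig := fun Γ A ψ => OrderDual.toDual (S16.PiP H Γ A (OrderDual.ofDual ψ))
    Sig_adj := fun {Γ A} ψ β =>
      S16.PiP_adj H map_inf (OrderDual.ofDual ψ) (OrderDual.ofDual β)
    Sig_bc := fun {Γ Δ A} f ψ =>
      congrArg OrderDual.toDual (S16.PiP_bc H map_inf f (OrderDual.ofDual ψ))
    Pi := fun Γ A ψ => OrderDual.toDual (S16.SigP H Γ A (OrderDual.ofDual ψ))
    Pi_adj := fun {Γ A} ψ β =>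
      S16.SigP_adj H map_inf (OrderDual.ofDual ψ) (OrderDual.ofDual β)
    Pi_bc := fun {Γ Δ A} f ψ =>
      congrArg OrderDual.toDual (S16.SigP_bc H map_inf f (OrderDual.ofDual ψ))
    eq := fun X => OrderDual.toDual (S16.rP H (H.eaco.elem.eq X))
    eq_spec := fun {X} α => S16.eq_spec' H map_inf (OrderDual.ofDual α)
    pow := H.ho.pow
    mem := fun A => OrderDual.toDual (H.ho.mem A)
    classify := fun A Y φ => by
      obtain ⟨χ, hχ⟩ := H.ho.classify A Y (OrderDual.ofDual φ)
      exact ⟨χ, congrArg OrderDual.toDual hχ⟩ }⟩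
end

section
/- A heaco (C,P) is a tripos if and only if it is implicational. -/
open CategoryTheory CategoryTheory.Limits

universe w v u

variable {C : Type u} [Category.{v} C] {P : C → Type w}

namespace Statement19Aux

variable {C : Type u} [Category.{v} C] [HasFiniteProducts C]
  {P : C → Type w} [∀ A, PartialOrder (P A)]

omit [HasFiniteProducts C] in
lemma map_congr {D : Doctrine C P} {X A : C} {f g : X ⟶ A} (h : f = g) (α : P A) :
    D.map f α = D.map g α := by rw [h]

omit [HasFiniteProducts C] in
lemma mapc (D : Doctrine C P) {X Y A : C} (f : X ⟶ Y) (g : Y ⟶ A) (α : P A) :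
    D.map f (D.map g α) = D.map (f ≫ g) α := (D.map_comp f g α).symm

/-- All the data needed for the backward direction, bundled:
a `Π`-structure with Beck–Chevalley, a stable Hilbert-style implication,
and a generic predicate `gen` (obtained from weak power objects). -/
structure Aux (D : Doctrine C P) where
  Pi : ∀ (Γ A : C), P (Γ ⨯ A) → P Γ
  adj : ∀ {Γ A : C} (ψ : P (Γ ⨯ A)) (β : P Γ), β ≤ Pi Γ A ψ ↔ D.map prod.fst β ≤ ψ
  bc : ∀ {Γ Δ A : C} (f : Δ ⟶ Γ) (ψ : P (Γ ⨯ A)),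
      D.map f (Pi Γ A ψ) = Pi Δ A (D.map (prod.map f (𝟙 A)) ψ)
  imp : ∀ {A : C}, P A → P A → P A
  map_imp : ∀ {X A : C} (f : X ⟶ A) (α β : P A),
      D.map f (imp α β) = imp (D.map f α) (D.map f β)
  pi_imp : ∀ {Γ A : C} (α : P Γ) (β : P (Γ ⨯ A)),
      Pi Γ A (imp (D.map prod.fst α) β) = imp α (Pi Γ A β)
  ax_a : ∀ {A : C} (φ ψ : P A), φ ≤ imp ψ φ
  ax_b : ∀ {A : C} (γ φ ψ : P A), imp γ (imp φ ψ) ≤ imp (imp γ φ) (imp γ ψ)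
  ax_c : ∀ {A : C} (γ φ ψ : P A), γ ≤ imp φ ψ → γ ≤ φ → γ ≤ ψ
  ax_d : ∀ {A : C} (γ φ ψ : P A), φ ≤ ψ → γ ≤ imp φ ψ
  Sg : C
  gen : P Sg
  gen_spec : ∀ (Y : C) (φ : P Y), ∃ χ : Y ⟶ Sg, D.map χ gen = φ

namespace Aux

variable {D : Doctrine C P} (E : Aux D)

/-! ### hypothesis-style implicational reasoning -/

lemma hypK {A : C} {γ α : P A} (β : P A) (h : γ ≤ α) : γ ≤ E.imp β α :=
  h.trans (E.ax_a α β)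

lemma mono_r {A : C} {γ φ ψ ψ' : P A} (h1 : ψ ≤ ψ') (h2 : γ ≤ E.imp φ ψ) :
    γ ≤ E.imp φ ψ' :=
  E.ax_c _ _ _ ((E.ax_d γ φ (E.imp ψ ψ') (E.ax_d φ ψ ψ' h1)).trans (E.ax_b φ ψ ψ')) h2

lemma mpU {A : C} {γ h x y : P A} (h1 : γ ≤ E.imp h (E.imp x y))
    (h2 : γ ≤ E.imp h x) : γ ≤ E.imp h y :=
  E.ax_c _ _ _ (h1.trans (E.ax_b h x y)) h2

lemma mpU2 {A : C} {γ b h x y : P A} (h1 : γ ≤ E.imp b (E.imp h (E.imp x y)))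
    (h2 : γ ≤ E.imp b (E.imp h x)) : γ ≤ E.imp b (E.imp h y) :=
  E.mpU (E.mono_r (E.ax_b h x y) h1) h2

/-- pairing: if `g ⊢ a` and `g ⊢ b` then `g ⊢ (a → b → s) → s`. -/
lemma pairI {A : C} {g a b s : P A} (ha : g ≤ a) (hb : g ≤ b) :
    g ≤ E.imp (E.imp a (E.imp b s)) s := by
  have t1 : g ≤ E.imp (E.imp a (E.imp b s)) (E.imp a (E.imp b s)) := E.ax_d _ _ _ le_rfl
  exact E.mpU (E.mpU t1 (E.hypK _ ha)) (E.hypK _ hb)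

/-- currying: if `g ⊢ a` then `g ⊢ b → ((a → b → s) → s)`. -/
lemma curryI {A : C} {g a : P A} (b s : P A) (ha : g ≤ a) :
    g ≤ E.imp b (E.imp (E.imp a (E.imp b s)) s) := by
  have u1 : g ≤ E.imp b (E.imp (E.imp a (E.imp b s)) (E.imp a (E.imp b s))) :=
    E.hypK _ (E.ax_d _ _ _ le_rfl)
  have u2 : g ≤ E.imp b (E.imp (E.imp a (E.imp b s)) a) := E.hypK _ (E.hypK _ ha)
  have u3 := E.mpU2 u1 u2
  have u4 : g ≤ E.imp b (E.imp (E.imp a (E.imp b s)) b) := E.ax_d _ _ _ (E.ax_a b _)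
  exact E.mpU2 u3 u4

/-- left injection: if `g ⊢ a` then `g ⊢ (a → s) → (t → s)`. -/
lemma inlI {A : C} {g a : P A} (s t : P A) (ha : g ≤ a) :
    g ≤ E.imp (E.imp a s) (E.imp t s) := by
  have u := E.mpU (E.ax_d g (E.imp a s) (E.imp a s) le_rfl) (E.hypK _ ha)
  exact E.mono_r (E.ax_a s t) u

/-- right injection: if `g ⊢ b` then `g ⊢ t → ((b → s) → s)`. -/
lemma inrI {A : C} {g b : P A} (s t : P A) (hb : g ≤ b) :
    g ≤ E.imp t (E.imp (E.imp b s) s) :=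
  E.hypK _ (E.mpU (E.ax_d g (E.imp b s) (E.imp b s) le_rfl) (E.hypK _ hb))

/-! ### instantiation and introduction for Pi -/

lemma inst {Γ A : C} (θ : P (Γ ⨯ A)) (t : Γ ⟶ A) :
    E.Pi Γ A θ ≤ D.map (prod.lift (𝟙 Γ) t) θ := by
  have h := (E.adj θ (E.Pi Γ A θ)).1 le_rfl
  have h2 := D.map_mono (prod.lift (𝟙 Γ) t) h
  rwa [mapc, prod.lift_fst, D.map_id] at h2

lemma pi_intro {Γ A : C} {θ : P (Γ ⨯ A)} {β : P Γ} (h : D.map prod.fst β ≤ θ) :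
    β ≤ E.Pi Γ A θ := (E.adj θ β).2 h

/-! ### the defined connectives -/

/-- `σ` pulled back to `P (A ⨯ Σ)`. -/
noncomputable def sA (A : C) : P (A ⨯ E.Sg) := D.map prod.snd E.gen

noncomputable def topP (A : C) : P A := E.Pi A E.Sg (E.imp (E.sA A) (E.sA A))

noncomputable def botP (A : C) : P A := E.Pi A E.Sg (E.sA A)

noncomputable def infP {A : C} (φ ψ : P A) : P A :=
  E.Pi A E.Sg (E.imp (E.imp (D.map prod.fst φ) (E.imp (D.map prod.fst ψ) (E.sA A)))
    (E.sA A))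

noncomputable def supP {A : C} (φ ψ : P A) : P A :=
  E.Pi A E.Sg (E.imp (E.imp (D.map prod.fst φ) (E.sA A))
    (E.imp (E.imp (D.map prod.fst ψ) (E.sA A)) (E.sA A)))

noncomputable def SigP (Γ A : C) (ψ : P (Γ ⨯ A)) : P Γ :=
  E.Pi Γ E.Sg (E.imp
    (E.Pi (Γ ⨯ E.Sg) A (E.imp (D.map (prod.map prod.fst (𝟙 A)) ψ)
      (D.map (prod.fst ≫ prod.snd) E.gen)))
    (E.sA Γ))

/-! ### reindexing computations -/

lemma lift_fst' {A : C} (χ : A ⟶ E.Sg) (φ : P A) :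
    D.map (prod.lift (𝟙 A) χ) (D.map prod.fst φ) = φ := by
  rw [mapc, prod.lift_fst, D.map_id]

lemma lift_sA {A : C} (χ : A ⟶ E.Sg) :
    D.map (prod.lift (𝟙 A) χ) (E.sA A) = D.map χ E.gen := by
  rw [sA, mapc, prod.lift_snd]

lemma pm_sA {X A : C} (f : X ⟶ A) :
    D.map (prod.map f (𝟙 E.Sg)) (E.sA A) = E.sA X := by
  rw [sA, sA, mapc]
  exact map_congr (by simp) _

lemma pm_fst' {X A : C} (f : X ⟶ A) (φ : P A) :
    D.map (prod.map f (𝟙 E.Sg)) (D.map prod.fst φ) = D.map prod.fst (D.map f φ) := by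
  rw [mapc, mapc]
  exact map_congr (by simp) _

/-! ### lattice structure -/

lemma le_topP {A : C} (α : P A) : α ≤ E.topP A :=
  E.pi_intro (E.ax_d _ _ _ le_rfl)

lemma botP_le {A : C} (α : P A) : E.botP A ≤ α := by
  obtain ⟨χ, hχ⟩ := E.gen_spec A α
  have h := E.inst (E.sA A) χ
  rwa [lift_sA, hχ] at h

lemma infP_le_left {A : C} (φ ψ : P A) : E.infP φ ψ ≤ φ := by
  obtain ⟨χ, hχ⟩ := E.gen_spec A φ
  have h := E.inst (E.imp (E.imp (D.map prod.fst φ) (E.imp (D.map prod.fst ψ) (E.sA A)))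
    (E.sA A)) χ
  rw [E.map_imp, E.map_imp, E.map_imp, E.lift_fst', E.lift_fst', E.lift_sA, hχ] at h
  exact E.ax_c _ _ _ h (E.ax_d _ _ _ (E.ax_a φ ψ))

lemma infP_le_right {A : C} (φ ψ : P A) : E.infP φ ψ ≤ ψ := by
  obtain ⟨χ, hχ⟩ := E.gen_spec A ψ
  have h := E.inst (E.imp (E.imp (D.map prod.fst φ) (E.imp (D.map prod.fst ψ) (E.sA A)))
    (E.sA A)) χ
  rw [E.map_imp, E.map_imp, E.map_imp, E.lift_fst', E.lift_fst', E.lift_sA, hχ] at h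
  exact E.ax_c _ _ _ h (E.ax_d _ _ _ (E.ax_d _ _ _ le_rfl))

lemma le_infP {A : C} {γ φ ψ : P A} (h1 : γ ≤ φ) (h2 : γ ≤ ψ) :
    γ ≤ E.infP φ ψ :=
  E.pi_intro (E.pairI (D.map_mono _ h1) (D.map_mono _ h2))

lemma imp_adj {A : C} (γ α β : P A) : γ ≤ E.imp α β ↔ E.infP γ α ≤ β := by
  constructor
  · intro h
    obtain ⟨χ, hχ⟩ := E.gen_spec A β
    have h2 := E.inst (E.imp (E.imp (D.map prod.fst γ) (E.imp (D.map prod.fst α) (E.sA A)))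
      (E.sA A)) χ
    rw [E.map_imp, E.map_imp, E.map_imp, E.lift_fst', E.lift_fst', E.lift_sA, hχ] at h2
    exact E.ax_c _ _ _ h2 (E.ax_d _ _ _ h)
  · intro h
    refine E.mono_r h ?_
    rw [infP, ← E.pi_imp]
    exact E.pi_intro (E.curryI _ _ le_rfl)

lemma le_supP_left {A : C} (φ ψ : P A) : φ ≤ E.supP φ ψ :=
  E.pi_intro (E.inlI _ _ le_rfl)

lemma le_supP_right {A : C} (φ ψ : P A) : ψ ≤ E.supP φ ψ :=
  E.pi_intro (E.inrI _ _ le_rfl)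

lemma supP_le {A : C} {φ ψ γ : P A} (h1 : φ ≤ γ) (h2 : ψ ≤ γ) :
    E.supP φ ψ ≤ γ := by
  obtain ⟨χ, hχ⟩ := E.gen_spec A γ
  have h := E.inst (E.imp (E.imp (D.map prod.fst φ) (E.sA A))
    (E.imp (E.imp (D.map prod.fst ψ) (E.sA A)) (E.sA A))) χ
  rw [E.map_imp, E.map_imp, E.map_imp, E.map_imp, E.lift_fst', E.lift_fst',
    E.lift_sA, hχ] at h
  have h3 := E.ax_c _ _ _ h (E.ax_d _ _ _ h1)
  exact E.ax_c _ _ _ h3 (E.ax_d _ _ _ h2)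

/-! ### stability of the defined connectives -/

lemma map_topP {X A : C} (f : X ⟶ A) : D.map f (E.topP A) = E.topP X := by
  rw [topP, topP, E.bc, E.map_imp, E.pm_sA]

lemma map_botP {X A : C} (f : X ⟶ A) : D.map f (E.botP A) = E.botP X := by
  rw [botP, botP, E.bc, E.pm_sA]

lemma map_infP {X A : C} (f : X ⟶ A) (φ ψ : P A) :
    D.map f (E.infP φ ψ) = E.infP (D.map f φ) (D.map f ψ) := by
  rw [infP, infP, E.bc, E.map_imp, E.map_imp, E.map_imp, E.pm_sA, E.pm_fst', E.pm_fst']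

lemma map_supP {X A : C} (f : X ⟶ A) (φ ψ : P A) :
    D.map f (E.supP φ ψ) = E.supP (D.map f φ) (D.map f ψ) := by
  rw [supP, supP, E.bc, E.map_imp, E.map_imp, E.map_imp, E.map_imp,
    E.pm_sA, E.pm_fst', E.pm_fst']

/-! ### the existential quantifier -/

lemma SigP_le {Γ A : C} {ψ : P (Γ ⨯ A)} {β : P Γ} (h : ψ ≤ D.map prod.fst β) :
    E.SigP Γ A ψ ≤ β := by
  obtain ⟨χ, hχ⟩ := E.gen_spec Γ β
  have hi := E.inst (E.imp
    (E.Pi (Γ ⨯ E.Sg) A (E.imp (D.map (prod.map prod.fst (𝟙 A)) ψ)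
      (D.map (prod.fst ≫ prod.snd) E.gen)))
    (E.sA Γ)) χ
  rw [E.map_imp, E.lift_sA, hχ] at hi
  have hk : D.map (prod.lift (𝟙 Γ) χ)
      (E.Pi (Γ ⨯ E.Sg) A (E.imp (D.map (prod.map prod.fst (𝟙 A)) ψ)
        (D.map (prod.fst ≫ prod.snd) E.gen)))
      = E.Pi Γ A (E.imp ψ (D.map prod.fst β)) := by
    rw [E.bc, E.map_imp]
    have c1 : D.map (prod.map (prod.lift (𝟙 Γ) χ) (𝟙 A))
        (D.map (prod.map prod.fst (𝟙 A)) ψ) = ψ := by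
      rw [mapc]
      have e : prod.map (prod.lift (𝟙 Γ) χ) (𝟙 A) ≫ prod.map prod.fst (𝟙 A)
          = 𝟙 (Γ ⨯ A) := by apply Limits.prod.hom_ext <;> simp [prod.lift_fst_assoc, prod.lift_snd_assoc, prod.lift_fst, prod.lift_snd]
      rw [map_congr e, D.map_id]
    have c2 : D.map (prod.map (prod.lift (𝟙 Γ) χ) (𝟙 A))
        (D.map (prod.fst ≫ prod.snd) E.gen) = D.map prod.fst β := by
      rw [mapc]
      have e : prod.map (prod.lift (𝟙 Γ) χ) (𝟙 A) ≫ prod.fst ≫ prod.snd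
          = (prod.fst : Γ ⨯ A ⟶ Γ) ≫ χ := by simp [prod.lift_fst_assoc, prod.lift_snd_assoc, prod.lift_fst, prod.lift_snd]
      rw [map_congr e, ← mapc, hχ]
    rw [c1, c2]
  rw [hk] at hi
  exact E.ax_c _ _ _ hi (E.pi_intro (E.ax_d _ _ _ h))

lemma le_SigP {Γ A : C} (ψ : P (Γ ⨯ A)) :
    ψ ≤ D.map prod.fst (E.SigP Γ A ψ) := by
  rw [SigP, E.bc, E.map_imp, E.pm_sA]
  apply E.pi_intro
  have hI : D.map (prod.map prod.fst (𝟙 E.Sg))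
      (E.Pi (Γ ⨯ E.Sg) A (E.imp (D.map (prod.map prod.fst (𝟙 A)) ψ)
        (D.map (prod.fst ≫ prod.snd) E.gen)))
      ≤ E.imp (D.map prod.fst ψ) (E.sA (Γ ⨯ A)) := by
    rw [E.bc]
    have hi := E.inst (D.map (prod.map (prod.map prod.fst (𝟙 E.Sg)) (𝟙 A))
      (E.imp (D.map (prod.map prod.fst (𝟙 A)) ψ)
        (D.map (prod.fst ≫ prod.snd) E.gen))) (prod.fst ≫ prod.snd)
    have key : D.map (prod.lift (𝟙 ((Γ ⨯ A) ⨯ E.Sg)) (prod.fst ≫ prod.snd))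
        (D.map (prod.map (prod.map prod.fst (𝟙 E.Sg)) (𝟙 A))
          (E.imp (D.map (prod.map prod.fst (𝟙 A)) ψ)
            (D.map (prod.fst ≫ prod.snd) E.gen)))
        = E.imp (D.map prod.fst ψ) (E.sA (Γ ⨯ A)) := by
      rw [mapc, E.map_imp]
      have c1 : D.map ((prod.lift (𝟙 ((Γ ⨯ A) ⨯ E.Sg)) (prod.fst ≫ prod.snd)) ≫
          prod.map (prod.map prod.fst (𝟙 E.Sg)) (𝟙 A))
          (D.map (prod.map prod.fst (𝟙 A)) ψ) = D.map prod.fst ψ := by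
        rw [mapc]
        exact map_congr (by apply Limits.prod.hom_ext <;> simp [prod.lift_fst_assoc, prod.lift_snd_assoc, prod.lift_fst, prod.lift_snd]) _
      have c2 : D.map ((prod.lift (𝟙 ((Γ ⨯ A) ⨯ E.Sg)) (prod.fst ≫ prod.snd)) ≫
          prod.map (prod.map prod.fst (𝟙 E.Sg)) (𝟙 A))
          (D.map (prod.fst ≫ prod.snd) E.gen) = E.sA (Γ ⨯ A) := by
        rw [mapc, sA]
        exact map_congr (by simp [prod.lift_fst_assoc, prod.lift_snd_assoc, prod.lift_fst, prod.lift_snd]) _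
      rw [c1, c2]
    rw [key] at hi
    exact hi
  exact E.mpU (E.ax_d _ _ _ hI) (E.ax_a _ _)

lemma SigP_adj {Γ A : C} (ψ : P (Γ ⨯ A)) (β : P Γ) :
    E.SigP Γ A ψ ≤ β ↔ ψ ≤ D.map prod.fst β :=
  ⟨fun h => (E.le_SigP ψ).trans (D.map_mono _ h), E.SigP_le⟩

lemma SigP_bc {Γ Δ A : C} (f : Δ ⟶ Γ) (ψ : P (Γ ⨯ A)) :
    D.map f (E.SigP Γ A ψ) = E.SigP Δ A (D.map (prod.map f (𝟙 A)) ψ) := by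
  rw [SigP, SigP, E.bc, E.map_imp, E.pm_sA]
  have hinner : D.map (prod.map f (𝟙 E.Sg))
      (E.Pi (Γ ⨯ E.Sg) A (E.imp (D.map (prod.map prod.fst (𝟙 A)) ψ)
        (D.map (prod.fst ≫ prod.snd) E.gen)))
      = E.Pi (Δ ⨯ E.Sg) A (E.imp
          (D.map (prod.map prod.fst (𝟙 A)) (D.map (prod.map f (𝟙 A)) ψ))
          (D.map (prod.fst ≫ prod.snd) E.gen)) := by
    rw [E.bc, E.map_imp]
    have c1 : D.map (prod.map (prod.map f (𝟙 E.Sg)) (𝟙 A))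
        (D.map (prod.map prod.fst (𝟙 A)) ψ)
        = D.map (prod.map prod.fst (𝟙 A)) (D.map (prod.map f (𝟙 A)) ψ) := by
      rw [mapc, mapc]
      exact map_congr (by apply Limits.prod.hom_ext <;> simp) _
    have c2 : D.map (prod.map (prod.map f (𝟙 E.Sg)) (𝟙 A))
        (D.map (prod.fst ≫ prod.snd) E.gen)
        = D.map (prod.fst ≫ prod.snd) E.gen := by
      rw [mapc]
      exact map_congr (by simp) _
    rw [c1, c2]
  rw [hinner]
/-! ### Leibniz equality -/

variable (HO : HigherOrder D)

noncomputable def eqP (X : C) : P (X ⨯ X) :=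
  E.Pi (X ⨯ X) (HO.pow X)
    (E.imp (D.map (prod.map prod.fst (𝟙 (HO.pow X))) (HO.mem X))
      (D.map (prod.map prod.snd (𝟙 (HO.pow X))) (HO.mem X)))

lemma top_le_diag_eqP (X : C) :
    E.topP X ≤ D.map (prod.lift (𝟙 X) (𝟙 X)) (E.eqP HO X) := by
  rw [eqP, E.bc, E.map_imp]
  have c1 : D.map (prod.map (prod.lift (𝟙 X) (𝟙 X)) (𝟙 (HO.pow X)))
      (D.map (prod.map prod.fst (𝟙 (HO.pow X))) (HO.mem X)) = HO.mem X := by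
    rw [mapc]
    have e : prod.map (prod.lift (𝟙 X) (𝟙 X)) (𝟙 (HO.pow X)) ≫
        prod.map prod.fst (𝟙 (HO.pow X)) = 𝟙 _ := by
      apply Limits.prod.hom_ext <;> simp [prod.lift_fst_assoc, prod.lift_snd_assoc, prod.lift_fst, prod.lift_snd]
    rw [map_congr e, D.map_id]
  have c2 : D.map (prod.map (prod.lift (𝟙 X) (𝟙 X)) (𝟙 (HO.pow X)))
      (D.map (prod.map prod.snd (𝟙 (HO.pow X))) (HO.mem X)) = HO.mem X := by
    rw [mapc]
    have e : prod.map (prod.lift (𝟙 X) (𝟙 X)) (𝟙 (HO.pow X)) ≫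
        prod.map prod.snd (𝟙 (HO.pow X)) = 𝟙 _ := by
      apply Limits.prod.hom_ext <;> simp [prod.lift_fst_assoc, prod.lift_snd_assoc, prod.lift_fst, prod.lift_snd]
    rw [map_congr e, D.map_id]
  rw [c1, c2]
  exact E.pi_intro (E.ax_d _ _ _ le_rfl)

lemma eqP_le {X : C} {α : P (X ⨯ X)}
    (h : E.topP X ≤ D.map (prod.lift (𝟙 X) (𝟙 X)) α) : E.eqP HO X ≤ α := by
  obtain ⟨χ, hχ⟩ := HO.classify X X (D.map (prod.lift prod.snd prod.fst) α)
  have hi := E.inst (E.imp (D.map (prod.map prod.fst (𝟙 (HO.pow X))) (HO.mem X))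
    (D.map (prod.map prod.snd (𝟙 (HO.pow X))) (HO.mem X))) (prod.fst ≫ χ)
  rw [E.map_imp] at hi
  have c1 : D.map (prod.lift (𝟙 (X ⨯ X)) (prod.fst ≫ χ))
      (D.map (prod.map prod.fst (𝟙 (HO.pow X))) (HO.mem X))
      = D.map (prod.lift prod.fst prod.fst) α := by
    rw [mapc]
    have e : prod.lift (𝟙 (X ⨯ X)) (prod.fst ≫ χ) ≫ prod.map prod.fst (𝟙 (HO.pow X))
        = prod.lift prod.fst prod.fst ≫ prod.map (𝟙 X) χ := by
      apply Limits.prod.hom_ext <;> simp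
    rw [map_congr e, ← mapc, hχ, mapc]
    have e2 : prod.lift (prod.fst : X ⨯ X ⟶ X) prod.fst ≫ prod.lift prod.snd prod.fst
        = prod.lift prod.fst prod.fst := by
      apply Limits.prod.hom_ext <;> simp [prod.lift_fst_assoc, prod.lift_snd_assoc, prod.lift_fst, prod.lift_snd]
    rw [map_congr e2]
  have c2 : D.map (prod.lift (𝟙 (X ⨯ X)) (prod.fst ≫ χ))
      (D.map (prod.map prod.snd (𝟙 (HO.pow X))) (HO.mem X)) = α := by
    rw [mapc]
    have e : prod.lift (𝟙 (X ⨯ X)) (prod.fst ≫ χ) ≫ prod.map prod.snd (𝟙 (HO.pow X))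
        = prod.lift prod.snd prod.fst ≫ prod.map (𝟙 X) χ := by
      apply Limits.prod.hom_ext <;> simp
    rw [map_congr e, ← mapc, hχ, mapc]
    have e2 : prod.lift (prod.snd : X ⨯ X ⟶ X) prod.fst ≫ prod.lift prod.snd prod.fst
        = 𝟙 _ := by
      apply Limits.prod.hom_ext <;> simp [prod.lift_fst_assoc, prod.lift_snd_assoc, prod.lift_fst, prod.lift_snd]
    rw [map_congr e2, D.map_id]
  rw [c1, c2] at hi
  refine E.ax_c _ _ _ hi ?_
  have h1 : E.eqP HO X ≤ E.topP (X ⨯ X) := E.le_topP _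
  have h2 : E.topP (X ⨯ X) = D.map prod.fst (E.topP X) := (E.map_topP _).symm
  have h3 : D.map (prod.fst : X ⨯ X ⟶ X) (E.topP X)
      ≤ D.map prod.fst (D.map (prod.lift (𝟙 X) (𝟙 X)) α) := D.map_mono _ h
  have e5 : (prod.fst : X ⨯ X ⟶ X) ≫ prod.lift (𝟙 X) (𝟙 X)
      = prod.lift prod.fst prod.fst := by
    apply Limits.prod.hom_ext <;> simp
  rw [mapc, map_congr e5] at h3
  exact h1.trans (h2.le.trans h3)

lemma eqP_spec {X : C} (α : P (X ⨯ X)) :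
    E.topP X ≤ D.map (prod.lift (𝟙 X) (𝟙 X)) α ↔ E.eqP HO X ≤ α :=
  ⟨E.eqP_le HO, fun h => (E.top_le_diag_eqP HO X).trans (D.map_mono _ h)⟩

/-! ### the tripos -/

noncomputable def toTripos : Tripos D where
  inf := E.infP
  sup := E.supP
  himp := E.imp
  top := E.topP
  bot := E.botP
  inf_le_left := E.infP_le_left
  inf_le_right := E.infP_le_right
  le_inf := fun _ _ _ => E.le_infP
  le_sup_left := E.le_supP_left
  le_sup_right := E.le_supP_right
  sup_le := fun _ _ _ => E.supP_le
  le_top := E.le_topP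
  bot_le := E.botP_le
  himp_adj := E.imp_adj
  map_inf := E.map_infP
  map_sup := E.map_supP
  map_himp := E.map_imp
  map_top := E.map_topP
  map_bot := E.map_botP
  Sig := E.SigP
  Sig_adj := E.SigP_adj
  Sig_bc := E.SigP_bc
  Pi := E.Pi
  Pi_adj := E.adj
  Pi_bc := E.bc
  eq := E.eqP HO
  eq_spec := E.eqP_spec HO
  pow := HO.pow
  mem := HO.mem
  classify := HO.classify

end Aux

/-- Weak power objects give a generic predicate. -/
lemma gen_exists {D : Doctrine C P} (HO : HigherOrder D) (Y : C) (φ : P Y) :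
    ∃ χ : Y ⟶ HO.pow (⊤_ C),
      D.map χ (D.map (prod.lift (terminal.from (HO.pow (⊤_ C))) (𝟙 (HO.pow (⊤_ C))))
        (HO.mem (⊤_ C))) = φ := by
  obtain ⟨χ, hχ⟩ := HO.classify (⊤_ C) Y (D.map prod.snd φ)
  refine ⟨χ, ?_⟩
  rw [mapc]
  have e : χ ≫ prod.lift (terminal.from (HO.pow (⊤_ C))) (𝟙 _)
      = prod.lift (terminal.from Y) (𝟙 Y) ≫ prod.map (𝟙 (⊤_ C)) χ := by
    apply Limits.prod.hom_ext
    · exact Subsingleton.elim _ _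
    · simp
  rw [map_congr e, ← mapc, hχ, mapc, prod.lift_snd, D.map_id]

end Statement19Aux

/-- A heaco `(C,P)` is a tripos if and only if it is
implicational (with respect to right adjoints along projections satisfying
Beck–Chevalley). -/
theorem statement19 {C : Type u} [Category.{v} C] [HasFiniteProducts C]
    {P : C → Type w} [∀ A, SemilatticeInf (P A)] [∀ A, OrderBot (P A)]
    (D : Doctrine C P)
    (map_inf : ∀ {X A : C} (f : X ⟶ A) (α β : P A),
      D.map f (α ⊓ β) = D.map f α ⊓ D.map f β)
    (H : Heaco D) :
    Nonempty (Tripos D) ↔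
      ∃ Pi : ∀ (Γ A : C), P (Γ ⨯ A) → P Γ,
        (∀ (Γ A : C) (ψ : P (Γ ⨯ A)) (β : P Γ),
          β ≤ Pi Γ A ψ ↔ D.map prod.fst β ≤ ψ) ∧
        (∀ (Γ Δ A : C) (f : Δ ⟶ Γ) (ψ : P (Γ ⨯ A)),
          D.map f (Pi Γ A ψ) = Pi Δ A (D.map (prod.map f (𝟙 A)) ψ)) ∧
        Nonempty (Implicational D Pi) := by
  constructor
  · rintro ⟨T⟩
    have hmp : ∀ {A : C} (a b c : P A), a ≤ T.himp b c → a ≤ b → a ≤ c := by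
      intro A a b c h1 h2
      exact (T.le_inf a a b le_rfl h2).trans ((T.himp_adj a b c).1 h1)
    refine ⟨T.Pi, fun Γ A ψ β => T.Pi_adj ψ β, fun Γ Δ A f ψ => T.Pi_bc f ψ, ⟨?_⟩⟩
    refine
      { imp := T.himp
        map_imp := T.map_himp
        pi_imp := ?_
        ax_a := fun φ ψ => (T.himp_adj _ _ _).2 (T.inf_le_left _ _)
        ax_b := ?_
        ax_c := fun γ φ ψ h1 h2 => hmp γ φ ψ h1 h2
        ax_d := fun γ φ ψ h => (T.himp_adj _ _ _).2 ((T.inf_le_right γ φ).trans h) }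
    · intro Γ A α β
      apply le_antisymm
      · refine (T.himp_adj _ _ _).2 ((T.Pi_adj _ _).2 ?_)
        rw [T.map_inf]
        exact (T.himp_adj _ _ _).1 ((T.Pi_adj _ _).1 le_rfl)
      · refine (T.Pi_adj _ _).2 ?_
        rw [T.map_himp]
        refine (T.himp_adj _ _ _).2 ?_
        exact ((T.himp_adj _ _ _).1 le_rfl).trans ((T.Pi_adj _ _).1 le_rfl)
    · intro A γ φ ψ
      refine (T.himp_adj _ _ _).2 ((T.himp_adj _ _ _).2 ?_)
      have wX : T.inf (T.inf (T.himp γ (T.himp φ ψ)) (T.himp γ φ)) γ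
          ≤ T.himp γ (T.himp φ ψ) := (T.inf_le_left _ _).trans (T.inf_le_left _ _)
      have wh : T.inf (T.inf (T.himp γ (T.himp φ ψ)) (T.himp γ φ)) γ
          ≤ T.himp γ φ := (T.inf_le_left _ _).trans (T.inf_le_right _ _)
      have wγ : T.inf (T.inf (T.himp γ (T.himp φ ψ)) (T.himp γ φ)) γ ≤ γ :=
        T.inf_le_right _ _
      exact hmp _ _ _ (hmp _ _ _ wX wγ) (hmp _ _ _ wh wγ)
  · rintro ⟨Pi, hadj, hbc, ⟨I⟩⟩
    exact ⟨Statement19Aux.Aux.toTripos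
      { Pi := Pi
        adj := fun ψ β => hadj _ _ ψ β
        bc := fun f ψ => hbc _ _ _ f ψ
        imp := I.imp
        map_imp := I.map_imp
        pi_imp := I.pi_imp
        ax_a := I.ax_a
        ax_b := I.ax_b
        ax_c := I.ax_c
        ax_d := I.ax_d
        Sg := H.ho.pow (⊤_ C)
        gen := D.map (prod.lift (terminal.from _) (𝟙 _)) (H.ho.mem (⊤_ C))
        gen_spec := Statement19Aux.gen_exists H.ho } H.ho⟩
end
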